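/- arXiv:1306.2904 — 3 statements merged into one kernel-verified Lean document; each statement's English description precedes it below -/
import Mathlib

section
/- Let T > 0, let r ≥ 1 be an integer and γ > 0 a real number, let s be as in the definition of Q*_{r,γ}, and set q = s/(s−γ) if γ is an integer and q = s/(s−⌊γ⌋−1) if γ is not an integer. For N ∈ ℕ define the graded mesh v_k = T(k/N)^q, k = 0,1,…,N. Then there exists a constant A > 0 (independent of N) such that for every f ∈ Q*_{r,γ}([0,T],1) and every N ≥ 1 there is a continuous function f_N : [0,T] → ℝ which coincides on [v₀,v₁] with a polynomial of degree at most r−1 and coincides on each interval [v_k, v_{k+1}], k = 1,…,N−1, with a polynomial of degree at most s−1, and which satisfies ‖f − f_N‖_{C[0,T]} ≤ A·N^{−s}. -/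
open Set Polynomial


lemma iteratedDerivWithin_of_subset' {f : ℝ → ℝ} {s t : Set ℝ} (hst : s ⊆ t)
    (hs : UniqueDiffOn ℝ s) (ht : UniqueDiffOn ℝ t) {n m : ℕ} (hf : ContDiffOn ℝ m f t)
    (hn : n ≤ m) {x : ℝ} (hx : x ∈ s) :
    iteratedDerivWithin n f s x = iteratedDerivWithin n f t x := by
  induction n generalizing x with
  | zero => simp
  | succ n ih =>
    rw [iteratedDerivWithin_succ, iteratedDerivWithin_succ]
    rw [derivWithin_congr (fun y hy => ih (Nat.le_of_succ_le hn) hy)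
      (ih (Nat.le_of_succ_le hn) hx)]
    exact derivWithin_subset hst (hs x hx)
      ((hf.differentiableOn_iteratedDerivWithin (by exact_mod_cast Nat.lt_of_succ_le hn) ht)
        x (hst hx))

/-- Taylor polynomial as a `Polynomial ℝ`. -/
noncomputable def taylorPoly (f : ℝ → ℝ) (n : ℕ) (s : Set ℝ) (x₀ : ℝ) : Polynomial ℝ :=
  ∑ k ∈ Finset.range (n + 1), C (iteratedDerivWithin k f s x₀ / k.factorial) * (X - C x₀) ^ k

lemma taylorPoly_natDegree_le (f : ℝ → ℝ) (n : ℕ) (s : Set ℝ) (x₀ : ℝ) :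
    (taylorPoly f n s x₀).natDegree ≤ n := by
  refine Polynomial.natDegree_sum_le_of_forall_le _ _ (fun k hk => ?_)
  calc (C (iteratedDerivWithin k f s x₀ / k.factorial) * (X - C x₀) ^ k).natDegree
      ≤ _ + _ := Polynomial.natDegree_mul_le
    _ ≤ n := by
        simp [Polynomial.natDegree_pow, Polynomial.natDegree_X_sub_C]
        exact Nat.lt_succ_iff.mp (Finset.mem_range.mp hk)

lemma taylorPoly_eval (f : ℝ → ℝ) (n : ℕ) (s : Set ℝ) (x₀ x : ℝ) :
    (taylorPoly f n s x₀).eval x = taylorWithinEval f n s x₀ x := by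
  rw [taylor_within_apply, taylorPoly]
  simp only [eval_finset_sum, eval_mul, eval_C, eval_pow, eval_sub, eval_X, smul_eq_mul]
  exact Finset.sum_congr rfl fun k _ => by ring

/-- Glue a sequence of functions along a mesh. -/
noncomputable def glueFun (v : ℕ → ℝ) (P : ℕ → ℝ → ℝ) : ℕ → ℝ → ℝ
  | 0 => P 0
  | (k+1) => fun t => if t ≤ v (k+1) then glueFun v P k t else P (k+1) t

lemma glueFun_eval_ge {v : ℕ → ℝ} {P : ℕ → ℝ → ℝ} (hv : Monotone v)
    (hm : ∀ k, P k (v (k+1)) = P (k+1) (v (k+1))) :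
    ∀ k t, v k ≤ t → glueFun v P k t = P k t := by
  intro k
  induction k with
  | zero => intro t _; rfl
  | succ k ih =>
    intro t ht
    by_cases h : t ≤ v (k+1)
    · have : t = v (k+1) := le_antisymm h ht
      subst this
      simp only [glueFun, if_pos h]
      rw [ih _ (hv (Nat.le_succ k)), hm]
    · simp only [glueFun, if_neg h]

lemma glueFun_eval {v : ℕ → ℝ} {P : ℕ → ℝ → ℝ} (hv : Monotone v)
    (hm : ∀ k, P k (v (k+1)) = P (k+1) (v (k+1))) :
    ∀ k j t, j ≤ k → v j ≤ t → t ≤ v (j+1) → glueFun v P k t = P j t := by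
  intro k
  induction k with
  | zero =>
    intro j t hj h1 _
    obtain rfl := Nat.le_zero.mp hj
    rfl
  | succ k ih =>
    intro j t hj h1 h2
    rcases Nat.lt_succ_iff_lt_or_eq.mp (Nat.lt_succ_of_le hj) with h | rfl
    · have hjk : j ≤ k := Nat.lt_succ_iff.mp h
      have : t ≤ v (k+1) := h2.trans (hv (Nat.succ_le_of_lt (Nat.lt_succ_of_le hjk)))
      simp only [glueFun, if_pos this]
      exact ih j t hjk h1 h2
    · exact glueFun_eval_ge hv hm _ t h1

lemma glueFun_continuous {v : ℕ → ℝ} {P : ℕ → ℝ → ℝ} (hv : Monotone v)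
    (hm : ∀ k, P k (v (k+1)) = P (k+1) (v (k+1))) (hP : ∀ k, Continuous (P k)) :
    ∀ k, Continuous (glueFun v P k) := by
  intro k
  induction k with
  | zero => exact hP 0
  | succ k ih =>
    refine Continuous.if_le ih (hP (k+1)) continuous_id continuous_const (fun x hx => ?_)
    subst hx
    rw [glueFun_eval_ge hv hm _ _ (hv (Nat.le_succ k)), hm]

lemma rpow_sub_rpow_le {a b q : ℝ} (ha : 0 ≤ a) (hab : a ≤ b) (hq : 1 ≤ q) :
    b ^ q - a ^ q ≤ q * b ^ (q - 1) * (b - a) := by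
  rcases eq_or_lt_of_le hab with rfl | hab'
  · simp
  obtain ⟨c, hc, hslope⟩ := exists_hasDerivAt_eq_slope (fun x => x ^ q)
    (fun x => q * x ^ (q - 1)) hab'
    (fun x _ => (Real.hasDerivAt_rpow_const (Or.inr hq)).continuousAt.continuousWithinAt)
    (fun x _ => Real.hasDerivAt_rpow_const (Or.inr hq))
  have hc0 : 0 ≤ c := le_of_lt (lt_of_le_of_lt ha hc.1)
  have : (b ^ q - a ^ q) / (b - a) ≤ q * b ^ (q - 1) := by
    rw [← hslope]
    have := Real.rpow_le_rpow hc0 hc.2.le (by linarith : (0:ℝ) ≤ q - 1)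
    nlinarith [Real.rpow_nonneg hc0 (q-1)]
  calc b ^ q - a ^ q = (b ^ q - a ^ q) / (b - a) * (b - a) := by
        rw [div_mul_cancel₀ _ (by linarith : b - a ≠ 0)]
    _ ≤ q * b ^ (q - 1) * (b - a) := by
        apply mul_le_mul_of_nonneg_right this (by linarith)

/-- Linear interpolation polynomial taking value `a` at `c` and value `b` at `d`. -/
noncomputable def linePoly (a b c d : ℝ) : Polynomial ℝ :=
  C a + C ((b - a) / (d - c)) * (X - C c)

lemma linePoly_natDegree_le (a b c d : ℝ) : (linePoly a b c d).natDegree ≤ 1 := by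
  refine le_trans (Polynomial.natDegree_add_le _ _) ?_
  simp only [Polynomial.natDegree_C, max_le_iff]
  refine ⟨Nat.zero_le 1, le_trans Polynomial.natDegree_mul_le ?_⟩
  simp [Polynomial.natDegree_X_sub_C]

lemma linePoly_eval_left (a b c d : ℝ) : (linePoly a b c d).eval c = a := by
  simp [linePoly]

lemma linePoly_eval_right {a b c d : ℝ} (h : c < d) : (linePoly a b c d).eval d = b := by
  simp only [linePoly, eval_add, eval_C, eval_mul, eval_sub, eval_X]
  rw [div_mul_eq_mul_div, mul_div_assoc, div_self (by linarith : d - c ≠ 0)]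
  ring

lemma linePoly_abs_le {a b c d t : ℝ} (h : c < d) (ht : t ∈ Icc c d) :
    |(linePoly a b c d).eval t| ≤ 2 * |a| + |b| := by
  simp only [linePoly, eval_add, eval_C, eval_mul, eval_sub, eval_X]
  have h1 : 0 ≤ (t - c) / (d - c) := div_nonneg (by linarith [ht.1]) (by linarith)
  have h2 : (t - c) / (d - c) ≤ 1 := by
    rw [div_le_one (by linarith)]; linarith [ht.2]
  calc |a + (b - a) / (d - c) * (t - c)| = |a + (b - a) * ((t - c) / (d - c))| := by
        ring_nf
    _ ≤ |a| + |b - a| * ((t - c) / (d - c)) := by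
        refine le_trans (abs_add_le _ _) ?_
        rw [abs_mul, abs_of_nonneg h1]
    _ ≤ |a| + |b - a| * 1 := by
        have := abs_nonneg (b - a)
        nlinarith
    _ ≤ 2 * |a| + |b| := by
        have := abs_sub_abs_le_abs_sub b a
        have := abs_sub (b) (a)
        cases abs_cases (b - a) <;> cases abs_cases a <;> cases abs_cases b <;> linarith

/-- The class `Q*_{r,γ}([0,T], 1)` (one-dimensional case). -/
def MemQStar (T M : ℝ) (r s : ℕ) (ζ : ℝ) (f : ℝ → ℝ) : Prop :=
  ContDiffOn ℝ r f (Set.Icc 0 T) ∧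
  ContDiffOn ℝ s f (Set.Ioc 0 T) ∧
  (∀ k : ℕ, k ≤ r → ∀ t ∈ Set.Icc (0:ℝ) T,
      |iteratedDerivWithin k f (Set.Icc 0 T) t| ≤ M) ∧
  (∀ k : ℕ, r < k → k ≤ s → ∀ t ∈ Set.Ioc (0:ℝ) T,
      |iteratedDerivWithin k f (Set.Ioc 0 T) t| ≤ M * t ^ (-((k : ℝ) - r - ζ)))

theorem spline_approx_QStar
    (T : ℝ) (hT : 0 < T) (r s : ℕ) (γ ζ : ℝ) (hr : 1 ≤ r) (hγ : 0 < γ)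
    (hsζ : ((∃ n : ℤ, γ = n) ∧ (s : ℝ) = r + γ ∧ ζ = 0) ∨
           ((¬ ∃ n : ℤ, γ = n) ∧ (s : ℝ) = r + ⌊γ⌋ + 1 ∧ ζ = 1 - Int.fract γ))
    (q : ℝ)
    (hq : ((∃ n : ℤ, γ = n) ∧ q = s / ((s : ℝ) - γ)) ∨
          ((¬ ∃ n : ℤ, γ = n) ∧ q = s / ((s : ℝ) - ⌊γ⌋ - 1))) :
    ∃ A : ℝ, 0 < A ∧
      ∀ f : ℝ → ℝ, MemQStar T 1 r s ζ f →
      ∀ N : ℕ, 1 ≤ N →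
        -- the graded mesh `v k = T (k/N)^q`
        ∃ fN : ℝ → ℝ, ContinuousOn fN (Set.Icc 0 T) ∧
          (∃ p : Polynomial ℝ, p.natDegree ≤ r - 1 ∧
            ∀ t ∈ Set.Icc (T * ((0 : ℝ) / N) ^ q) (T * ((1 : ℝ) / N) ^ q),
              fN t = p.eval t) ∧
          (∀ k : ℕ, 1 ≤ k → k ≤ N - 1 →
            ∃ p : Polynomial ℝ, p.natDegree ≤ s - 1 ∧
              ∀ t ∈ Set.Icc (T * ((k : ℝ) / N) ^ q) (T * (((k : ℝ) + 1) / N) ^ q),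
                fN t = p.eval t) ∧
          ∀ t ∈ Set.Icc (0:ℝ) T, |f t - fN t| ≤ A * (N : ℝ) ^ (-(s : ℝ)) := by
  -- ## Scalar facts
  have hr1 : (1:ℝ) ≤ (r:ℝ) := by exact_mod_cast hr
  obtain ⟨hγζ, hζ0, hqq, hsr⟩ :
      γ = (s:ℝ) - r - ζ ∧ 0 ≤ ζ ∧ q = (s:ℝ) / r ∧ (r:ℝ) + 1 ≤ (s:ℝ) := by
    rcases hsζ with ⟨⟨n, hn⟩, hs, hz⟩ | ⟨hni, hs, hz⟩
    · rcases hq with ⟨_, hqe⟩ | ⟨hni, _⟩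
      · refine ⟨by linarith, le_of_eq hz.symm, ?_, ?_⟩
        · rw [hqe]; congr 1; linarith
        · have hn1 : (1:ℤ) ≤ n := by
            have : (0:ℝ) < n := hn ▸ hγ
            exact_mod_cast this
          have : (1:ℝ) ≤ γ := by rw [hn]; exact_mod_cast hn1
          linarith
      · exact absurd ⟨n, hn⟩ hni
    · rcases hq with ⟨he, _⟩ | ⟨_, hqe⟩
      · exact absurd he hni
      · have hfr : γ = (⌊γ⌋ : ℝ) + Int.fract γ := by rw [Int.floor_add_fract]
        have hfr0 : 0 ≤ Int.fract γ := Int.fract_nonneg γ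
        have hfl : (0:ℝ) ≤ (⌊γ⌋:ℝ) := by exact_mod_cast Int.floor_nonneg.2 hγ.le
        have hfr1 : Int.fract γ < 1 := Int.fract_lt_one γ
        refine ⟨by linarith, by linarith, ?_, by linarith⟩
        rw [hqe]; congr 1; linarith
  have hr0 : (0:ℝ) < r := by linarith
  have hs0 : (0:ℝ) < s := by linarith
  have hq1 : 1 ≤ q := by rw [hqq, le_div_iff₀ hr0]; linarith
  have hq0 : 0 < q := by linarith
  have hqr : q * r = s := by rw [hqq]; field_simp
  have hs1 : 1 ≤ s := by exact_mod_cast hs0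
  have hrs : r < s := by exact_mod_cast (by linarith : (r:ℝ) < s)
  have hs2 : 2 ≤ s := by omega
  have hζq : 0 ≤ q * ζ := mul_nonneg hq0.le hζ0
  -- ## the constant
  set C₁ : ℝ := T ^ (-γ) * (T * q * 2 ^ (q - 1)) ^ s with hC₁
  have hC₁0 : 0 < C₁ :=
    mul_pos (Real.rpow_pos_of_pos hT _)
      (pow_pos (by positivity) s)
  set A : ℝ := 2 * T ^ r + 2 * C₁ + 1 with hA
  have hA0 : 0 < A := by positivity
  refine ⟨A, hA0, ?_⟩
  intro f hf N hN
  obtain ⟨hf1, hf2, hf3, hf4⟩ := hf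
  have hN0 : (0:ℝ) < N := by exact_mod_cast hN
  -- ## the mesh
  set v : ℕ → ℝ := fun k => T * ((k:ℝ)/N) ^ q with hv
  have hvmono : Monotone v := by
    intro i j hij
    refine mul_le_mul_of_nonneg_left
      (Real.rpow_le_rpow (by positivity) ?_ hq0.le) hT.le
    gcongr
    all_goals first | exact_mod_cast hij | skip
  have hvstrict : ∀ k : ℕ, v k < v (k+1) := by
    intro k
    refine mul_lt_mul_of_pos_left (Real.rpow_lt_rpow (by positivity) ?_ hq0) hT
    rw [div_lt_div_iff₀ hN0 hN0]
    push_cast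
    nlinarith
  have hv0 : v 0 = 0 := by
    simp [hv, Real.zero_rpow (ne_of_gt hq0)]
  have hvN : v N = T := by
    simp only [hv]
    rw [div_self (ne_of_gt hN0), Real.one_rpow, mul_one]
  have hvle : ∀ k : ℕ, k ≤ N → v k ≤ T := fun k hk => hvN ▸ hvmono hk
  have hvpos : ∀ k : ℕ, 1 ≤ k → 0 < v k := by
    intro k hk
    exact mul_pos hT (Real.rpow_pos_of_pos (div_pos (by exact_mod_cast hk) hN0) _)
  have hv10 : 0 < v 1 := hvpos 1 le_rfl
  have hv1T : v 1 ≤ T := hvle 1 hN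
  have hNs : (0:ℝ) < (N:ℝ) ^ (-(s:ℝ)) := Real.rpow_pos_of_pos hN0 _
  -- npow of v 1 equals the target rate
  have hv1pow : (v 1) ^ r = T ^ r * (N:ℝ) ^ (-(s:ℝ)) := by
    have h1N : (0:ℝ) ≤ (1:ℝ)/N := by positivity
    have : v 1 = T * ((1:ℝ)/N) ^ q := by simp [hv]
    rw [this, mul_pow, ← Real.rpow_natCast (((1:ℝ)/N) ^ q) r, ← Real.rpow_mul h1N, hqr,
      one_div, Real.inv_rpow hN0.le, ← Real.rpow_neg hN0.le]
  -- ## first-interval Taylor estimate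
  set p0 : Polynomial ℝ := taylorPoly f (r-1) (Icc 0 (v 1)) 0 with hp0
  have E0 : ∀ t ∈ Icc 0 (v 1), |f t - p0.eval t| ≤ T ^ r * (N:ℝ) ^ (-(s:ℝ)) := by
    intro t ht
    have hsub : Icc (0:ℝ) (v 1) ⊆ Icc 0 T := Icc_subset_Icc le_rfl hv1T
    have hcd : ContDiffOn ℝ ((r-1)+1 : ℕ) f (Icc 0 (v 1)) := by
      rw [Nat.sub_add_cancel hr]
      exact hf1.mono hsub
    have hbd : ∀ y ∈ Icc (0:ℝ) (v 1),
        ‖iteratedDerivWithin ((r-1)+1) f (Icc 0 (v 1)) y‖ ≤ 1 := by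
      intro y hy
      rw [Nat.sub_add_cancel hr, Real.norm_eq_abs,
        iteratedDerivWithin_of_subset' hsub (uniqueDiffOn_Icc hv10)
          (uniqueDiffOn_Icc hT) hf1 le_rfl hy]
      exact hf3 r le_rfl y (hsub hy)
    have htay : ‖f t - taylorWithinEval f (r-1) (Icc 0 (v 1)) 0 t‖ ≤
        1 * (t - 0) ^ ((r-1)+1) / ((r-1).factorial : ℝ) :=
      taylor_mean_remainder_bound hv10.le hcd ht hbd
    rw [hp0, taylorPoly_eval, ← Real.norm_eq_abs]
    refine htay.trans ?_
    simp only [Nat.sub_add_cancel hr, one_mul]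
    rw [← hv1pow]
    have h1 : (1:ℝ) ≤ ((r-1).factorial : ℝ) := by exact_mod_cast (r-1).factorial_pos
    have h3 : (0:ℝ) ≤ (t - 0) ^ r := pow_nonneg (by simpa using ht.1) r
    refine (div_le_self h3 h1).trans ?_
    apply pow_le_pow_left₀ (by simpa using ht.1)
    simpa using ht.2
  -- ## interior Taylor estimates
  set Tay : ℕ → Polynomial ℝ :=
    fun k => taylorPoly f (s-1) (Icc (v k) (v (k+1))) (v k) with hTay
  have Ek : ∀ k : ℕ, 1 ≤ k → k ≤ N - 1 → ∀ t ∈ Icc (v k) (v (k+1)),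
      |f t - (Tay k).eval t| ≤ C₁ * (N:ℝ) ^ (-(s:ℝ)) := by
    intro k hk1 hkN t ht
    have hk1N : k + 1 ≤ N := by omega
    have hvk0 : 0 < v k := hvpos k hk1
    have hsub : Icc (v k) (v (k+1)) ⊆ Ioc 0 T := fun y hy =>
      ⟨lt_of_lt_of_le hvk0 hy.1, le_trans hy.2 (hvle (k+1) hk1N)⟩
    have hcd : ContDiffOn ℝ ((s-1)+1 : ℕ) f (Icc (v k) (v (k+1))) := by
      rw [Nat.sub_add_cancel hs1]
      exact hf2.mono hsub
    have hbd : ∀ y ∈ Icc (v k) (v (k+1)),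
        ‖iteratedDerivWithin ((s-1)+1) f (Icc (v k) (v (k+1))) y‖ ≤ (v k) ^ (-γ) := by
      intro y hy
      rw [Nat.sub_add_cancel hs1, Real.norm_eq_abs,
        iteratedDerivWithin_of_subset' hsub (uniqueDiffOn_Icc (hvstrict k))
          (uniqueDiffOn_Ioc 0 T) hf2 le_rfl hy]
      refine le_trans (hf4 s hrs le_rfl y (hsub hy)) ?_
      rw [one_mul]
      have hyγ : -((s:ℝ) - r - ζ) = -γ := by rw [hγζ]
      rw [hyγ]
      exact Real.rpow_le_rpow_of_nonpos hvk0 hy.1 (by linarith)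
    have htay : ‖f t - taylorWithinEval f (s-1) (Icc (v k) (v (k+1))) (v k) t‖ ≤
        (v k) ^ (-γ) * (t - v k) ^ ((s-1)+1) / ((s-1).factorial : ℝ) :=
      taylor_mean_remainder_bound (hvstrict k).le hcd ht hbd
    rw [hTay, taylorPoly_eval, ← Real.norm_eq_abs]
    refine htay.trans ?_
    -- the numerical estimate
    set u : ℝ := (k:ℝ)/N with hu
    have hu0 : 0 < u := div_pos (by exact_mod_cast hk1) hN0
    have hu1 : u ≤ 1 := by
      rw [hu, div_le_one hN0]
      exact_mod_cast (by omega : k ≤ N)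
    have hvk : v k = T * u ^ q := by simp [hv, hu]
    set w : ℝ := ((k:ℝ)+1)/N with hwdef
    have hw : v (k+1) = T * w ^ q := by
      simp only [hv, hwdef]
      push_cast
      ring_nf
    have hw0 : (0:ℝ) ≤ w := by positivity
    have hk1r : (1:ℝ) ≤ (k:ℝ) := by exact_mod_cast hk1
    have huw : u ≤ w := by
      rw [hu, hwdef]
      gcongr
      linarith
    have hd : v (k+1) - v k ≤ T * q * 2 ^ (q-1) * u ^ (q-1) * (1/N) := by
      have h1 := rpow_sub_rpow_le hu0.le huw hq1
      have hwu : w - u = 1/N := by rw [hu, hwdef]; field_simp; ring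
      have hw2u : w ≤ 2 * u := by
        rw [hu, hwdef, div_le_iff₀ hN0, mul_assoc, div_mul_cancel₀ _ (ne_of_gt hN0)]
        linarith
      have h2 : w ^ (q-1) ≤ 2 ^ (q-1) * u ^ (q-1) := by
        rw [← Real.mul_rpow (by norm_num) hu0.le]
        exact Real.rpow_le_rpow hw0 hw2u (by linarith)
      calc v (k+1) - v k = T * (w ^ q - u ^ q) := by rw [hw, hvk]; ring
        _ ≤ T * (q * w ^ (q-1) * (w - u)) := mul_le_mul_of_nonneg_left h1 hT.le
        _ = T * q * w ^ (q-1) * (1/N) := by rw [hwu]; ring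
        _ ≤ T * q * (2 ^ (q-1) * u ^ (q-1)) * (1/N) := by
            apply mul_le_mul_of_nonneg_right _ (by positivity)
            exact mul_le_mul_of_nonneg_left h2 (by positivity)
        _ = T * q * 2 ^ (q-1) * u ^ (q-1) * (1/N) := by ring
    simp only [Nat.sub_add_cancel hs1]
    have hfac : (1:ℝ) ≤ ((s-1).factorial : ℝ) := by exact_mod_cast (s-1).factorial_pos
    have hvkγ : (0:ℝ) < (v k) ^ (-γ) := Real.rpow_pos_of_pos hvk0 _
    have ht0 : 0 ≤ t - v k := by linarith [ht.1]
    have htd : t - v k ≤ T * q * 2 ^ (q-1) * u ^ (q-1) * (1/N) := by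
      have := ht.2; linarith
    have hvkg : (v k) ^ (-γ) = T ^ (-γ) * u ^ (q * -γ) := by
      rw [hvk, Real.mul_rpow hT.le (Real.rpow_nonneg hu0.le _), ← Real.rpow_mul hu0.le]
    have h3 : (u ^ (q-1)) ^ s = u ^ ((q-1) * (s:ℝ)) := by
      rw [← Real.rpow_natCast (u ^ (q-1)) s, ← Real.rpow_mul hu0.le]
    have h4 : ((1:ℝ)/N) ^ s = (N:ℝ) ^ (-(s:ℝ)) := by
      rw [one_div, ← Real.rpow_natCast ((N:ℝ)⁻¹) s, Real.inv_rpow hN0.le,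
        ← Real.rpow_neg hN0.le]
    have hexp : q * -γ + (q-1) * (s:ℝ) = q * ζ := by
      linear_combination (-q) * hγζ + hqr
    calc (v k) ^ (-γ) * (t - v k) ^ s / ((s-1).factorial : ℝ)
        ≤ (v k) ^ (-γ) * (t - v k) ^ s := div_le_self (by positivity) hfac
      _ ≤ (v k) ^ (-γ) * (T * q * 2 ^ (q-1) * u ^ (q-1) * (1/N)) ^ s := by
          exact mul_le_mul_of_nonneg_left (pow_le_pow_left₀ ht0 htd _) hvkγ.le
      _ = C₁ * (N:ℝ) ^ (-(s:ℝ)) * (u ^ (q * -γ) * u ^ ((q-1) * (s:ℝ))) := by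
          rw [hvkg, mul_pow, mul_pow, h3, h4, hC₁]; ring
      _ = C₁ * (N:ℝ) ^ (-(s:ℝ)) * u ^ (q * -γ + (q-1) * (s:ℝ)) := by
          rw [← Real.rpow_add hu0]
      _ = C₁ * (N:ℝ) ^ (-(s:ℝ)) * u ^ (q * ζ) := by rw [hexp]
      _ ≤ C₁ * (N:ℝ) ^ (-(s:ℝ)) * 1 :=
          mul_le_mul_of_nonneg_left (Real.rpow_le_one hu0.le hu1 hζq) (by positivity)
      _ = C₁ * (N:ℝ) ^ (-(s:ℝ)) := mul_one _
  -- ## the piecewise polynomial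
  classical
  set G : ℕ → ℝ := fun k => if k = 1 then p0.eval (v 1) else f (v k) with hG
  set pp : ℕ → Polynomial ℝ := fun k =>
    if k = 0 then p0 else
      Tay k + linePoly (G k - f (v k)) (G (k+1) - (Tay k).eval (v (k+1)))
        (v k) (v (k+1)) with hpp
  have hpp0 : pp 0 = p0 := by simp [hpp]
  have hppeval : ∀ k : ℕ, 1 ≤ k → pp k =
      Tay k + linePoly (G k - f (v k)) (G (k+1) - (Tay k).eval (v (k+1)))
        (v k) (v (k+1)) := by
    intro k hk
    simp only [hpp, if_neg (by omega : ¬ k = 0)]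
  have hGk : ∀ k : ℕ, (pp k).eval (v (k+1)) = G (k+1) := by
    intro k
    rcases Nat.eq_zero_or_pos k with rfl | hk
    · simp [hpp, hG]
    · rw [hppeval k hk, eval_add, linePoly_eval_right (hvstrict k)]
      ring
  have hGk' : ∀ k : ℕ, 1 ≤ k → (pp k).eval (v k) = G k := by
    intro k hk
    rw [hppeval k hk, eval_add, linePoly_eval_left, hTay, taylorPoly_eval,
      taylorWithinEval_self]
    ring
  set P : ℕ → ℝ → ℝ := fun k t => (pp (min k (N-1))).eval t with hP
  have hm : ∀ k : ℕ, P k (v (k+1)) = P (k+1) (v (k+1)) := by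
    intro k
    by_cases hc : k + 1 ≤ N - 1
    · have h1 : min k (N-1) = k := min_eq_left (by omega)
      have h2 : min (k+1) (N-1) = k+1 := min_eq_left hc
      simp only [hP, h1, h2]
      rw [hGk k, hGk' (k+1) (by omega)]
    · have h1 : min k (N-1) = N-1 := min_eq_right (by omega)
      have h2 : min (k+1) (N-1) = N-1 := min_eq_right (by omega)
      simp only [hP, h1, h2]
  set fN : ℝ → ℝ := glueFun v P (N-1) with hfN
  have hPcont : ∀ k, Continuous (P k) := by
    intro k
    simp only [hP]
    exact Polynomial.continuous _
  have hfNeval : ∀ j : ℕ, j ≤ N - 1 → ∀ t, v j ≤ t → t ≤ v (j+1) →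
      fN t = (pp j).eval t := by
    intro j hj t h1 h2
    rw [hfN, glueFun_eval hvmono hm (N-1) j t hj h1 h2]
    simp only [hP, min_eq_left hj]
  have e0 : T * ((0:ℝ)/N) ^ q = v 0 := by simp [hv]
  have e1 : T * ((1:ℝ)/N) ^ q = v 1 := by simp [hv]
  refine ⟨fN, (glueFun_continuous hvmono hm hPcont (N-1)).continuousOn,
    ⟨p0, taylorPoly_natDegree_le _ _ _ _, ?_⟩, ?_, ?_⟩
  · -- first piece
    intro t ht
    rw [e0, e1] at ht
    rw [hfNeval 0 (Nat.zero_le _) t ht.1 ht.2, hpp0]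
  · -- interior pieces
    intro k hk1 hkN
    refine ⟨pp k, ?_, ?_⟩
    · rw [hppeval k hk1]
      refine (Polynomial.natDegree_add_le _ _).trans (max_le ?_ ?_)
      · simp only [hTay]
        exact taylorPoly_natDegree_le _ _ _ _
      · exact (linePoly_natDegree_le _ _ _ _).trans (by omega)
    · intro t ht
      have ek : T * ((k:ℝ)/N) ^ q = v k := by simp [hv]
      have ek1 : T * (((k:ℝ)+1)/N) ^ q = v (k+1) := by
        simp only [hv]
        push_cast
        ring_nf
      rw [ek, ek1] at ht
      rw [hfNeval k hkN t ht.1 ht.2]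
  · -- the error bound
    intro t ht
    set j := Nat.findGreatest (fun i => v i ≤ t) (N-1) with hj
    have hjle : j ≤ N-1 := Nat.findGreatest_le _
    have hj1 : v j ≤ t := Nat.findGreatest_spec (P := fun i => v i ≤ t) (Nat.zero_le _) (by show v 0 ≤ t; rw [hv0]; exact ht.1)
    have hj2 : t ≤ v (j+1) := by
      by_cases hc : j = N - 1
      · have hne : N - 1 + 1 = N := by omega
        rw [hc, hne, hvN]
        exact ht.2
      · have hgr := Nat.findGreatest_is_greatest (Nat.lt_succ_self j)
          (by omega : j + 1 ≤ N - 1)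
        exact (lt_of_not_ge hgr).le
    clear_value j
    rw [hfNeval j hjle t hj1 hj2]
    rcases Nat.eq_zero_or_pos j with rfl | hjpos
    · rw [hpp0]
      refine (E0 t ⟨ht.1, hj2⟩).trans ?_
      have hTA : T ^ r ≤ A := by
        rw [hA]
        have := pow_pos hT r
        linarith
      exact mul_le_mul_of_nonneg_right hTA hNs.le
    · have hE := Ek j hjpos hjle t ⟨hj1, hj2⟩
      have ha : |G j - f (v j)| ≤ T ^ r * (N:ℝ) ^ (-(s:ℝ)) := by
        by_cases h1 : j = 1
        · subst h1
          simp only [hG, if_pos rfl]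
          rw [abs_sub_comm]
          exact E0 (v 1) ⟨hv10.le, le_rfl⟩
        · simp only [hG, if_neg h1, sub_self, abs_zero]
          positivity
      have hb : |G (j+1) - (Tay j).eval (v (j+1))| ≤ C₁ * (N:ℝ) ^ (-(s:ℝ)) := by
        have hGj : G (j+1) = f (v (j+1)) := by
          simp only [hG]
          rw [if_neg (by omega)]
        rw [hGj]
        exact Ek j hjpos hjle (v (j+1)) ⟨(hvstrict j).le, le_rfl⟩
      have hline := linePoly_abs_le (a := G j - f (v j))
        (b := G (j+1) - (Tay j).eval (v (j+1))) (hvstrict j) ⟨hj1, hj2⟩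
      have habs : |f t - (pp j).eval t| ≤ |f t - (Tay j).eval t| +
          |(linePoly (G j - f (v j)) (G (j+1) - (Tay j).eval (v (j+1)))
            (v j) (v (j+1))).eval t| := by
        rw [hppeval j hjpos, eval_add]
        have hre : f t - ((Tay j).eval t + (linePoly (G j - f (v j))
            (G (j+1) - (Tay j).eval (v (j+1))) (v j) (v (j+1))).eval t) =
            (f t - (Tay j).eval t) + -((linePoly (G j - f (v j))
            (G (j+1) - (Tay j).eval (v (j+1))) (v j) (v (j+1))).eval t) := by ring
        rw [hre]
        exact (abs_add_le _ _).trans (by rw [abs_neg])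
      refine habs.trans ?_
      have hfin : |f t - (Tay j).eval t| +
          |(linePoly (G j - f (v j)) (G (j+1) - (Tay j).eval (v (j+1)))
            (v j) (v (j+1))).eval t| ≤
          C₁ * (N:ℝ) ^ (-(s:ℝ)) + (2 * (T ^ r * (N:ℝ) ^ (-(s:ℝ))) +
            C₁ * (N:ℝ) ^ (-(s:ℝ))) := by
        refine add_le_add hE (hline.trans ?_)
        have := abs_nonneg (G j - f (v j))
        linarith
      refine hfin.trans ?_
      have h1 : C₁ * (N:ℝ) ^ (-(s:ℝ)) + (2 * (T ^ r * (N:ℝ) ^ (-(s:ℝ))) +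
          C₁ * (N:ℝ) ^ (-(s:ℝ))) = (2 * C₁ + 2 * T ^ r) * (N:ℝ) ^ (-(s:ℝ)) := by
        ring
      rw [h1]
      refine mul_le_mul_of_nonneg_right ?_ hNs.le
      rw [hA]
      linarith
end

section
/- Let a > 0 and let m ≥ 4 be an integer. Consider the m interpolation nodes x₀ = −a, x_{m−1} = a, and x_i = a·cos((2i−1)π/(2(m−2))) for i = 1,…,m−2 (the roots of the Chebyshev polynomial of the first kind of degree m−2 scaled to [−a,a]). Let ψ_i(t) = ∏_{j≠i}(t−x_j)/(x_i−x_j) be the Lagrange fundamental polynomials for these nodes, and let λ_m = max_{t∈[−a,a]} Σ_{i=0}^{m−1} |ψ_i(t)| be the Lebesgue constant. Then there exists an absolute constant C > 0 (independent of a and m) such that λ_m ≤ C·m²·ln m. -/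
open Set Real Finset

/-- The interpolation nodes on `[-a, a]`: the endpoints `±a` together with the roots of
the Chebyshev polynomial of the first kind of degree `m - 2` scaled to `[-a, a]`. -/
noncomputable def chebClosedNode (a : ℝ) (m : ℕ) (i : Fin m) : ℝ :=
  if (i : ℕ) = 0 then -a
  else if (i : ℕ) = m - 1 then a
  else a * Real.cos ((2 * ((i : ℕ) : ℝ) - 1) * Real.pi / (2 * ((m : ℝ) - 2)))

/-- The Lagrange fundamental polynomial for the node system `chebClosedNode a m`. -/
noncomputable def lagrangeFund (a : ℝ) (m : ℕ) (i : Fin m) (t : ℝ) : ℝ :=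
  ∏ j ∈ Finset.univ.erase i,
    (t - chebClosedNode a m j) / (chebClosedNode a m i - chebClosedNode a m j)

open Polynomial

lemma cheb_aux (n : ℕ) :
    ((Polynomial.Chebyshev.T ℝ ((n:ℤ)+1)).natDegree ≤ n+1 ∧
      (Polynomial.Chebyshev.T ℝ ((n:ℤ)+1)).coeff (n+1) = 2^n) ∧
    ((Polynomial.Chebyshev.T ℝ ((n:ℤ)+2)).natDegree ≤ n+2 ∧
      (Polynomial.Chebyshev.T ℝ ((n:ℤ)+2)).coeff (n+2) = 2^(n+1)) := by
  induction n with
  | zero =>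
    refine ⟨⟨?_, ?_⟩, ?_, ?_⟩
    · rw [show ((0:ℕ):ℤ)+1 = 1 by norm_num, Polynomial.Chebyshev.T_one]; simp
    · rw [show ((0:ℕ):ℤ)+1 = 1 by norm_num, Polynomial.Chebyshev.T_one]; simp
    · rw [show ((0:ℕ):ℤ)+2 = 2 by norm_num, Polynomial.Chebyshev.T_two]
      compute_degree <;> simp
    · rw [show ((0:ℕ):ℤ)+2 = 2 by norm_num, Polynomial.Chebyshev.T_two]
      simp [Polynomial.coeff_sub, Polynomial.coeff_X_pow, Polynomial.coeff_one]
  | succ k ih =>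
    obtain ⟨⟨hd1, hc1⟩, ⟨hd2, hc2⟩⟩ := ih
    have e1 : ((k+1:ℕ):ℤ)+1 = (k:ℤ)+2 := by push_cast; ring
    have e2 : ((k+1:ℕ):ℤ)+2 = (k:ℤ)+1+2 := by push_cast; ring
    have heq := Polynomial.Chebyshev.T_add_two ℝ ((k:ℤ)+1)
    rw [show (k:ℤ)+1+1 = (k:ℤ)+2 by ring] at heq
    refine ⟨⟨by rw [e1]; exact hd2.trans (by omega), by rw [e1]; exact_mod_cast hc2⟩, ?_, ?_⟩
    · rw [e2, heq]
      refine (Polynomial.natDegree_sub_le _ _).trans (max_le ?_ (hd1.trans (by omega)))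
      refine (Polynomial.natDegree_mul_le).trans ?_
      have h2X : (2 * Polynomial.X : ℝ[X]).natDegree ≤ 1 :=
        (Polynomial.natDegree_mul_le).trans (by simp)
      omega
    · rw [e2, heq]
      rw [Polynomial.coeff_sub,
        Polynomial.coeff_eq_zero_of_natDegree_lt (lt_of_le_of_lt hd1 (by omega)), sub_zero]
      rw [mul_assoc, Polynomial.coeff_ofNat_mul, show (k+1)+2 = (k+2)+1 by ring,
        Polynomial.coeff_X_mul, hc2]
      ring

noncomputable def thAng (n k : ℕ) : ℝ := (2*(k:ℝ)-1)*Real.pi/(2*(n:ℝ))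

lemma thAng_lb {n k : ℕ} (hn : 1 ≤ n) (hk : 1 ≤ k) :
    Real.pi/(2*(n:ℝ)) ≤ thAng n k := by
  unfold thAng
  have hπ := Real.pi_pos
  have hk' : (1:ℝ) ≤ (k:ℝ) := by exact_mod_cast hk
  have hn' : (1:ℝ) ≤ (n:ℝ) := by exact_mod_cast hn
  rw [div_le_div_iff₀ (by positivity) (by positivity)]
  nlinarith [mul_nonneg (mul_nonneg (by linarith : (0:ℝ) ≤ 2*(k:ℝ)-2) hπ.le)
    (by positivity : (0:ℝ) ≤ 2*(n:ℝ))]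

lemma thAng_ub {n k : ℕ} (hn : 1 ≤ n) (hk : k ≤ n) :
    thAng n k ≤ Real.pi - Real.pi/(2*(n:ℝ)) := by
  unfold thAng
  have hπ := Real.pi_pos
  have hk' : (k:ℝ) ≤ (n:ℝ) := by exact_mod_cast hk
  have hn' : (1:ℝ) ≤ (n:ℝ) := by exact_mod_cast hn
  have h2n : (0:ℝ) < 2*(n:ℝ) := by positivity
  rw [div_le_iff₀ h2n]
  have hc : Real.pi/(2*(n:ℝ))*(2*(n:ℝ)) = Real.pi := div_mul_cancel₀ _ (ne_of_gt h2n)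
  nlinarith [mul_nonneg (by linarith : (0:ℝ) ≤ 2*((n:ℝ)-(k:ℝ))) hπ.le]

lemma thAng_pos {n k : ℕ} (hn : 1 ≤ n) (hk : 1 ≤ k) : 0 < thAng n k :=
  lt_of_lt_of_le (by positivity : (0:ℝ) < Real.pi/(2*(n:ℝ))) (thAng_lb hn hk)

lemma thAng_lt_pi {n k : ℕ} (hn : 1 ≤ n) (hk : k ≤ n) : thAng n k < Real.pi := by
  have hn' : (1:ℝ) ≤ (n:ℝ) := by exact_mod_cast hn
  have : Real.pi/(2*(n:ℝ)) > 0 := by positivity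
  linarith [thAng_ub hn hk]

lemma n_mul_thAng {n k : ℕ} (hn : 1 ≤ n) :
    (n:ℝ) * thAng n k = (k:ℝ)*Real.pi - Real.pi/2 := by
  unfold thAng
  have hn' : ((n:ℝ)) ≠ 0 := Nat.cast_ne_zero.mpr (by omega)
  field_simp

lemma cos_n_thAng {n k : ℕ} (hn : 1 ≤ n) : Real.cos ((n:ℝ) * thAng n k) = 0 := by
  rw [n_mul_thAng hn, Real.cos_sub, Real.cos_pi_div_two, Real.sin_pi_div_two]
  simp [Real.sin_nat_mul_pi]

lemma abs_sin_n_thAng {n k : ℕ} (hn : 1 ≤ n) : |Real.sin ((n:ℝ) * thAng n k)| = 1 := by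
  have h := Real.sin_sq_add_cos_sq ((n:ℝ) * thAng n k)
  rw [cos_n_thAng hn] at h
  have h2 := sq_abs (Real.sin ((n:ℝ)*thAng n k))
  nlinarith [abs_nonneg (Real.sin ((n:ℝ)*thAng n k))]

lemma thAng_inj {n : ℕ} (hn : 1 ≤ n) {k l : ℕ} (hkl : thAng n k = thAng n l) : k = l := by
  unfold thAng at hkl
  have hπ := Real.pi_ne_zero
  have hn' : ((n:ℝ)) ≠ 0 := Nat.cast_ne_zero.mpr (by omega)
  field_simp at hkl
  have h : (k:ℝ) = l := by linarith
  exact_mod_cast h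

lemma thAng_mem_Icc {n k : ℕ} (hn : 1 ≤ n) (hk : k ∈ Finset.Icc 1 n) :
    thAng n k ∈ Set.Icc 0 Real.pi := by
  rw [Finset.mem_Icc] at hk
  exact ⟨(thAng_pos hn hk.1).le, (thAng_lt_pi hn hk.2).le⟩

lemma cos_thAng_injOn {n : ℕ} (hn : 1 ≤ n) :
    Set.InjOn (fun k => Real.cos (thAng n k)) ↑(Finset.Icc 1 n) := by
  intro k hk l hl h
  exact thAng_inj hn (Real.injOn_cos (thAng_mem_Icc hn hk) (thAng_mem_Icc hn hl) h)

lemma nodal_cheb (n : ℕ) (hn : 1 ≤ n) :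
    Lagrange.nodal (Finset.Icc 1 n) (fun k => Real.cos (thAng n k))
      = Polynomial.C ((2:ℝ)^(n-1))⁻¹ * Polynomial.Chebyshev.T ℝ (n:ℤ) := by
  set v : ℕ → ℝ := fun k => Real.cos (thAng n k) with hv
  have hTd : (Polynomial.Chebyshev.T ℝ (n:ℤ)).natDegree ≤ n := by
    have h := (cheb_aux (n-1)).1.1
    have e : ((n-1:ℕ):ℤ)+1 = (n:ℤ) := by omega
    rw [e] at h
    omega
  have hTc : (Polynomial.Chebyshev.T ℝ (n:ℤ)).coeff n = 2^(n-1) := by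
    have h := (cheb_aux (n-1)).1.2
    have e : ((n-1:ℕ):ℤ)+1 = (n:ℤ) := by omega
    have e2 : (n-1)+1 = n := by omega
    rw [e, e2] at h
    exact h
  have hcard : (Finset.Icc 1 n).card = n := by rw [Nat.card_Icc]; omega
  set D : Polynomial ℝ := Lagrange.nodal (Finset.Icc 1 n) v
      - Polynomial.C ((2:ℝ)^(n-1))⁻¹ * Polynomial.Chebyshev.T ℝ (n:ℤ) with hD
  have hDle : D.natDegree ≤ n := by
    refine (Polynomial.natDegree_sub_le _ _).trans (max_le ?_ ?_)
    · rw [Lagrange.natDegree_nodal, hcard]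
    · exact (Polynomial.natDegree_C_mul_le _ _).trans hTd
  have hDcoeff : D.coeff n = 0 := by
    rw [hD, Polynomial.coeff_sub, Polynomial.coeff_C_mul, hTc]
    have hmon : (Lagrange.nodal (Finset.Icc 1 n) v).coeff n = 1 := by
      have := Lagrange.nodal_monic (s := Finset.Icc 1 n) (v := v)
      have hnd : (Lagrange.nodal (Finset.Icc 1 n) v).natDegree = n := by
        rw [Lagrange.natDegree_nodal, hcard]
      have h2 := this.coeff_natDegree
      rwa [hnd] at h2
    rw [hmon, inv_mul_cancel₀ (by positivity)]
    ring
  have hDdeg : D.natDegree < n := by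
    rcases eq_or_ne D 0 with h0 | h0
    · rw [h0]; simpa using (show 0 < n by omega)
    · rcases lt_or_eq_of_le hDle with h | h
      · exact h
      · exfalso
        have := Polynomial.leadingCoeff_ne_zero.mpr h0
        rw [Polynomial.leadingCoeff, h, hDcoeff] at this
        exact this rfl
  have hzero : D = 0 := by
    apply Polynomial.eq_zero_of_natDegree_lt_card_of_eval_eq_zero' D
      ((Finset.Icc 1 n).image v)
    · intro x hx
      rw [Finset.mem_image] at hx
      obtain ⟨k, hk, rfl⟩ := hx
      rw [hD, Polynomial.eval_sub, Polynomial.eval_mul, Polynomial.eval_C]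
      rw [Lagrange.eval_nodal_at_node hk]
      have : Polynomial.eval (v k) (Polynomial.Chebyshev.T ℝ (n:ℤ)) = 0 := by
        have := Polynomial.Chebyshev.T_real_cos (thAng n k) (n:ℤ)
        rw [hv]
        simp only []
        rw [this]
        push_cast
        exact cos_n_thAng hn
      rw [this]
      ring
    · rw [Finset.card_image_of_injOn (cos_thAng_injOn hn), hcard]
      exact hDdeg
  have := sub_eq_zero.mp hzero
  exact this

lemma prod_cheb_cos (n : ℕ) (hn : 1 ≤ n) (φ : ℝ) :
    ∏ k ∈ Finset.Icc 1 n, (Real.cos φ - Real.cos (thAng n k))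
      = ((2:ℝ)^(n-1))⁻¹ * Real.cos ((n:ℝ)*φ) := by
  have := congrArg (Polynomial.eval (Real.cos φ)) (nodal_cheb n hn)
  rw [Lagrange.eval_nodal, Polynomial.eval_mul, Polynomial.eval_C,
    Polynomial.Chebyshev.T_real_cos] at this
  rw [this]
  norm_num

lemma deriv_prod_node (n : ℕ) (hn : 1 ≤ n) {k : ℕ} (hk : k ∈ Finset.Icc 1 n) :
    (∏ j ∈ (Finset.Icc 1 n).erase k, (Real.cos (thAng n k) - Real.cos (thAng n j)))
        * Real.sin (thAng n k)
      = ((2:ℝ)^(n-1))⁻¹ * (n:ℝ) * Real.sin ((n:ℝ) * thAng n k) := by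
  classical
  set v : ℕ → ℝ := fun j => Real.cos (thAng n j) with hv
  set P : Polynomial ℝ := Lagrange.nodal (Finset.Icc 1 n) v with hP
  set θ : ℝ := thAng n k with hθ
  have hfun : (fun φ => Polynomial.eval (Real.cos φ) P)
      = fun φ => ((2:ℝ)^(n-1))⁻¹ * Real.cos ((n:ℝ)*φ) := by
    funext φ
    rw [hP, Lagrange.eval_nodal]
    exact prod_cheb_cos n hn φ
  have h1 : HasDerivAt (fun φ => Polynomial.eval (Real.cos φ) P)
      (Polynomial.eval (Real.cos θ) (Polynomial.derivative P) * (-Real.sin θ)) θ :=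
    (P.hasDerivAt (Real.cos θ)).comp θ (Real.hasDerivAt_cos θ)
  have h2 : HasDerivAt (fun φ => ((2:ℝ)^(n-1))⁻¹ * Real.cos ((n:ℝ)*φ))
      (((2:ℝ)^(n-1))⁻¹ * (-Real.sin ((n:ℝ)*θ) * (n:ℝ))) θ := by
    have hl : HasDerivAt (fun φ : ℝ => (n:ℝ)*φ) (n:ℝ) θ := by
      simpa using (hasDerivAt_id θ).const_mul (n:ℝ)
    exact ((Real.hasDerivAt_cos ((n:ℝ)*θ)).comp θ hl).const_mul _
  rw [hfun] at h1
  have huniq := h1.unique h2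
  have hPd : Polynomial.eval (Real.cos θ) (Polynomial.derivative P)
      = ∏ j ∈ (Finset.Icc 1 n).erase k, (Real.cos (thAng n k) - Real.cos (thAng n j)) := by
    rw [hP, hθ]
    have := Lagrange.eval_nodal_derivative_eval_node_eq (s := Finset.Icc 1 n) (v := v) hk
    rw [this, Lagrange.eval_nodal]
  rw [hPd] at huniq
  nlinarith [huniq]

lemma abs_sin_le_sin {d s : ℝ} (hs : s ∈ Set.Icc 0 Real.pi) (h1 : |d| ≤ s)
    (h2 : |d| ≤ Real.pi - s) : |Real.sin d| ≤ Real.sin s := by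
  have hd2 : |d| ≤ Real.pi/2 := by
    rcases le_total s (Real.pi/2) with h | h
    · linarith
    · linarith
  have habs : |Real.sin d| = Real.sin |d| := by
    rcases le_total 0 d with h | h
    · rw [abs_of_nonneg h, abs_of_nonneg]
      exact Real.sin_nonneg_of_nonneg_of_le_pi h (by linarith [Real.pi_pos, abs_of_nonneg h])
    · have hsd : Real.sin d ≤ 0 :=
        Real.sin_nonpos_of_nonpos_of_neg_pi_le h (by linarith [Real.pi_pos, abs_of_nonpos h])
      rw [abs_of_nonpos h, Real.sin_neg, abs_of_nonpos hsd]
  rw [habs]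
  rcases le_total s (Real.pi/2) with h | h
  · exact Real.strictMonoOn_sin.monotoneOn ⟨by linarith [abs_nonneg d], hd2⟩
      ⟨by linarith [hs.1], h⟩ h1
  · rw [← Real.sin_pi_sub s]
    exact Real.strictMonoOn_sin.monotoneOn ⟨by linarith [abs_nonneg d], hd2⟩
      ⟨by linarith [hs.2], by linarith⟩ h2

lemma sin_le_two_sin_half {x y : ℝ} (hx : x ∈ Set.Icc 0 Real.pi) (hy : y ∈ Set.Icc 0 Real.pi) :
    Real.sin x ≤ 2 * Real.sin ((x+y)/2) := by
  set s := (x+y)/2 with hs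
  set d := (x-y)/2 with hd
  have hsI : s ∈ Set.Icc 0 Real.pi := ⟨by simp only [hs]; linarith [hx.1, hy.1],
    by simp only [hs]; linarith [hx.2, hy.2]⟩
  have h1 : |d| ≤ s := abs_le.2 ⟨by simp only [hd, hs]; linarith [hx.1], by simp only [hd, hs]; linarith [hy.1]⟩
  have h2 : |d| ≤ Real.pi - s := abs_le.2 ⟨by simp only [hd, hs]; linarith [hy.2], by simp only [hd, hs]; linarith [hx.2]⟩
  have key := abs_sin_le_sin hsI h1 h2
  have hxsd : x = s + d := by simp only [hs, hd]; ring
  rw [hxsd, Real.sin_add]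
  have hss : 0 ≤ Real.sin s := Real.sin_nonneg_of_nonneg_of_le_pi hsI.1 hsI.2
  have hc1 : Real.sin s * Real.cos d ≤ Real.sin s := by
    nlinarith [Real.cos_le_one d]
  have hc2 : Real.cos s * Real.sin d ≤ Real.sin s := by
    calc Real.cos s * Real.sin d ≤ |Real.cos s * Real.sin d| := le_abs_self _
    _ = |Real.cos s| * |Real.sin d| := abs_mul _ _
    _ ≤ 1 * Real.sin s := by
        apply mul_le_mul (Real.abs_cos_le_one s) key (abs_nonneg _) zero_le_one
    _ = Real.sin s := one_mul _
  linarith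

lemma abs_cos_sub_cos_le (a b : ℝ) : |Real.cos a - Real.cos b| ≤ |a - b| := by
  rw [Real.cos_sub_cos]
  rw [abs_mul, abs_mul]
  have h1 : |Real.sin ((a-b)/2)| ≤ |(a-b)/2| := Real.abs_sin_le_abs
  have h2 : |Real.sin ((a+b)/2)| ≤ 1 := Real.abs_sin_le_one _
  have : |(-2 : ℝ)| = 2 := by norm_num
  rw [this]
  calc 2 * |Real.sin ((a+b)/2)| * |Real.sin ((a-b)/2)|
      ≤ 2 * 1 * |(a-b)/2| := by
        apply mul_le_mul (by nlinarith [abs_nonneg (Real.sin ((a+b)/2))]) h1 (abs_nonneg _) (by norm_num)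
    _ = |a - b| := by rw [abs_div, abs_two]; ring

lemma sin_thAng_lb {n k : ℕ} (hn : 1 ≤ n) (hk1 : 1 ≤ k) (hk2 : k ≤ n) :
    1/(n:ℝ) ≤ Real.sin (thAng n k) := by
  have hn' : (1:ℝ) ≤ (n:ℝ) := by exact_mod_cast hn
  have hπ := Real.pi_pos
  have hlb := thAng_lb (k := k) hn hk1
  have hub := thAng_ub (k := k) hn hk2
  have hnn : (0:ℝ) < (n:ℝ) := by linarith
  have heq : 2/Real.pi * (Real.pi/(2*(n:ℝ))) = 1/(n:ℝ) := by
    field_simp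
  have hp0 : (0:ℝ) < Real.pi/(2*(n:ℝ)) := by positivity
  rcases le_total (thAng n k) (Real.pi/2) with h | h
  · have := Real.mul_le_sin (by linarith : (0:ℝ) ≤ thAng n k) h
    have h2 : 2/Real.pi * (Real.pi/(2*(n:ℝ))) ≤ 2/Real.pi * thAng n k := by
      apply mul_le_mul_of_nonneg_left hlb (by positivity)
    rw [heq] at h2
    linarith
  · have h1 : (0:ℝ) ≤ Real.pi - thAng n k := by
      have : Real.pi/(2*(n:ℝ)) > 0 := by positivity
      linarith
    have h2 : Real.pi - thAng n k ≤ Real.pi/2 := by linarith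
    have := Real.mul_le_sin h1 h2
    rw [Real.sin_pi_sub] at this
    have h3 : 2/Real.pi * (Real.pi/(2*(n:ℝ))) ≤ 2/Real.pi * (Real.pi - thAng n k) := by
      apply mul_le_mul_of_nonneg_left (by linarith) (by positivity)
    rw [heq] at h3
    linarith

lemma key_ineq {n : ℕ} (hn : 1 ≤ n) {φ θ : ℝ} (hφ : φ ∈ Set.Icc 0 Real.pi)
    (hθ1 : 0 < θ) (hθ2 : θ < Real.pi) (hcz : Real.cos ((n:ℝ)*θ) = 0)
    (hsin : 1/(n:ℝ) ≤ Real.sin θ) (hne : Real.cos φ ≠ Real.cos θ) :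
    Real.sin φ^2 * |Real.cos ((n:ℝ)*φ)| / ((n:ℝ) * Real.sin θ * |Real.cos φ - Real.cos θ|)
      ≤ Real.pi * n := by
  have hπ := Real.pi_pos
  have hn' : (1:ℝ) ≤ (n:ℝ) := by exact_mod_cast hn
  set s := (φ + θ)/2 with hs
  set d := (φ - θ)/2 with hd
  have hφθ : φ ≠ θ := fun h => hne (by rw [h])
  have hdne : d ≠ 0 := by
    simp only [hd]
    intro h
    exact hφθ (by linarith [h, sub_eq_zero.mp (by linarith : φ - θ = 0)])
  have hdpos : 0 < |d| := abs_pos.mpr hdne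
  have hdle : |d| ≤ Real.pi/2 := by
    rw [abs_le]
    constructor <;> simp only [hd] <;> [linarith [hφ.1]; linarith [hφ.2]]
  have hspos : 0 < Real.sin s := by
    apply Real.sin_pos_of_pos_of_lt_pi
    · simp only [hs]; linarith [hφ.1]
    · simp only [hs]; linarith [hφ.2]
  have hsinθ : 0 < Real.sin θ := Real.sin_pos_of_pos_of_lt_pi hθ1 hθ2
  -- |cos φ - cos θ| = 2 sin s |sin d|
  have hcc : |Real.cos φ - Real.cos θ| = 2 * Real.sin s * |Real.sin d| := by
    rw [Real.cos_sub_cos, abs_mul, abs_mul]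
    rw [abs_of_nonneg hspos.le]
    norm_num
    exact Or.inl rfl
  have hsind : 2/Real.pi * |d| ≤ |Real.sin d| := Real.mul_abs_le_abs_sin hdle
  have hsinφ2 : Real.sin φ ≤ 2 * Real.sin s := sin_le_two_sin_half hφ ⟨hθ1.le, hθ2.le⟩
  have hsinφ0 : 0 ≤ Real.sin φ := Real.sin_nonneg_of_nonneg_of_le_pi hφ.1 hφ.2
  have hsinφ1 : Real.sin φ ≤ 1 := Real.sin_le_one φ
  have hcos : |Real.cos ((n:ℝ)*φ)| ≤ 2*(n:ℝ)*|d| := by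
    calc |Real.cos ((n:ℝ)*φ)| = |Real.cos ((n:ℝ)*φ) - Real.cos ((n:ℝ)*θ)| := by rw [hcz, sub_zero]
      _ ≤ |(n:ℝ)*φ - (n:ℝ)*θ| := _root_.abs_cos_sub_cos_le _ _
      _ = (n:ℝ)*|φ - θ| := by rw [← mul_sub, abs_mul, abs_of_nonneg (by linarith : (0:ℝ) ≤ (n:ℝ))]
      _ = 2*(n:ℝ)*|d| := by
          simp only [hd, abs_div]
          rw [abs_two]  -- |(φ-θ)/2| = |φ-θ|/2
          ring
  -- main estimate
  have hNum : Real.sin φ^2 * |Real.cos ((n:ℝ)*φ)| ≤ (2*Real.sin s) * (2*(n:ℝ)*|d|) := by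
    have : Real.sin φ^2 ≤ 2*Real.sin s := by nlinarith
    apply mul_le_mul this hcos (abs_nonneg _) (by positivity)
  have hDen : (n:ℝ) * Real.sin θ * (2*Real.sin s*(2/Real.pi*|d|))
      ≤ (n:ℝ) * Real.sin θ * |Real.cos φ - Real.cos θ| := by
    rw [hcc]
    apply mul_le_mul_of_nonneg_left _ (by positivity)
    apply mul_le_mul_of_nonneg_left hsind (by positivity)
  have hDpos : 0 < (n:ℝ) * Real.sin θ * (2*Real.sin s*(2/Real.pi*|d|)) := by positivity
  calc Real.sin φ^2 * |Real.cos ((n:ℝ)*φ)| / ((n:ℝ) * Real.sin θ * |Real.cos φ - Real.cos θ|)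
      ≤ ((2*Real.sin s) * (2*(n:ℝ)*|d|)) / ((n:ℝ) * Real.sin θ * (2*Real.sin s*(2/Real.pi*|d|))) := by
        apply div_le_div₀ (by positivity) hNum hDpos hDen
    _ = Real.pi / Real.sin θ := by
        field_simp
    _ ≤ Real.pi * n := by
        rw [div_le_iff₀ hsinθ]
        rw [div_le_iff₀ (by positivity : (0:ℝ) < (n:ℝ))] at hsin
        nlinarith

noncomputable def nodeN (m j : ℕ) : ℝ :=
  if j = 0 then -1 else if j = m-1 then 1 else Real.cos (thAng (m-2) j)

noncomputable def psiN (m j : ℕ) (t : ℝ) : ℝ :=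
  ∏ l ∈ (Finset.range m).erase j, (t - nodeN m l)/(nodeN m j - nodeN m l)

lemma chebClosedNode_scale {a : ℝ} (m : ℕ) (i : Fin m) :
    chebClosedNode a m i = a * chebClosedNode 1 m i := by
  unfold chebClosedNode
  split_ifs <;> ring

lemma chebClosedNode_one {m : ℕ} (hm : 4 ≤ m) (i : Fin m) :
    chebClosedNode 1 m i = nodeN m (i : ℕ) := by
  unfold chebClosedNode nodeN thAng
  have hcast : ((m:ℝ)) - 2 = ((m-2 : ℕ) : ℝ) := by
    have : (2:ℕ) ≤ m := by omega
    push_cast [Nat.cast_sub this]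
    ring
  split_ifs <;> simp [hcast]

lemma lagrangeFund_scale {a : ℝ} (ha : 0 < a) (m : ℕ) (i : Fin m) (t : ℝ) :
    lagrangeFund a m i t = lagrangeFund 1 m i (t/a) := by
  unfold lagrangeFund
  apply Finset.prod_congr rfl
  intro j _
  rw [chebClosedNode_scale m i, chebClosedNode_scale m j]
  have h1 : a * chebClosedNode 1 m i - a * chebClosedNode 1 m j
      = a * (chebClosedNode 1 m i - chebClosedNode 1 m j) := by ring
  have h2 : t - a * chebClosedNode 1 m j = a * (t/a - chebClosedNode 1 m j) := by
    field_simp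
  rw [h1, h2, mul_div_mul_left _ _ (ne_of_gt ha)]

lemma lagrangeFund_one_eq_psiN {m : ℕ} (hm : 4 ≤ m) (i : Fin m) (t : ℝ) :
    lagrangeFund 1 m i t = psiN m (i : ℕ) t := by
  unfold lagrangeFund psiN
  rw [← Finset.prod_attach ((Finset.range m).erase (i:ℕ))]
  apply Finset.prod_bij (fun (j : Fin m) (hj : j ∈ Finset.univ.erase i) =>
    (⟨(j:ℕ), by
      rcases Finset.mem_erase.mp hj with ⟨hne, _⟩
      simp only [Finset.mem_erase, Finset.mem_range]
      exact ⟨fun h => hne (Fin.ext h), j.isLt⟩⟩ :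
      {x // x ∈ (Finset.range m).erase (i:ℕ)}))
  · intro j hj; exact Finset.mem_attach _ _
  · intro j1 h1 j2 h2 h
    apply Fin.ext
    simpa using congrArg Subtype.val h
  · intro j hj
    have hj' := j.2
    rw [Finset.mem_erase, Finset.mem_range] at hj'
    refine ⟨⟨(j:ℕ), hj'.2⟩, Finset.mem_erase.mpr ⟨fun h => hj'.1 (by simpa using congrArg Fin.val h), Finset.mem_univ _⟩, ?_⟩
    apply Subtype.ext
    simp
  · intro j hj
    rw [chebClosedNode_one hm i, chebClosedNode_one hm j]

lemma nodeN_zero (m : ℕ) : nodeN m 0 = -1 := by simp [nodeN]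

lemma nodeN_last {m : ℕ} (hm : 4 ≤ m) : nodeN m (m-1) = 1 := by
  unfold nodeN
  rw [if_neg (by omega), if_pos rfl]

lemma nodeN_int {m j : ℕ} (hm : 4 ≤ m) (h1 : 1 ≤ j) (h2 : j ≤ m-2) :
    nodeN m j = Real.cos (thAng (m-2) j) := by
  unfold nodeN
  rw [if_neg (by omega), if_neg (by omega)]

lemma range_decomp {m : ℕ} (hm : 4 ≤ m) :
    Finset.range m = insert 0 (insert (m-1) (Finset.Icc 1 (m-2))) := by
  ext j
  simp only [Finset.mem_range, Finset.mem_insert, Finset.mem_Icc]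
  omega

lemma erase_zero_decomp {m : ℕ} (hm : 4 ≤ m) :
    (Finset.range m).erase 0 = insert (m-1) (Finset.Icc 1 (m-2)) := by
  ext j
  simp only [Finset.mem_erase, Finset.mem_range, Finset.mem_insert, Finset.mem_Icc]
  omega

lemma erase_last_decomp {m : ℕ} (hm : 4 ≤ m) :
    (Finset.range m).erase (m-1) = insert 0 (Finset.Icc 1 (m-2)) := by
  ext j
  simp only [Finset.mem_erase, Finset.mem_range, Finset.mem_insert, Finset.mem_Icc]
  omega

lemma erase_int_decomp {m k : ℕ} (hm : 4 ≤ m) (h1 : 1 ≤ k) (h2 : k ≤ m-2) :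
    (Finset.range m).erase k
      = insert 0 (insert (m-1) ((Finset.Icc 1 (m-2)).erase k)) := by
  ext j
  simp only [Finset.mem_erase, Finset.mem_range, Finset.mem_insert, Finset.mem_Icc]
  omega

-- |cos (n π)| = 1
lemma abs_cos_nat_pi (n : ℕ) : |Real.cos ((n:ℝ)*Real.pi)| = 1 := by
  have h := Real.sin_sq_add_cos_sq ((n:ℝ)*Real.pi)
  rw [Real.sin_nat_mul_pi] at h
  nlinarith [abs_nonneg (Real.cos ((n:ℝ)*Real.pi)), sq_abs (Real.cos ((n:ℝ)*Real.pi))]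

lemma psiN_zero_bound {m : ℕ} (hm : 4 ≤ m) {t : ℝ} (ht : t ∈ Set.Icc (-1:ℝ) 1) :
    |psiN m 0 t| ≤ 1 := by
  set n := m - 2 with hn
  have hn1 : 1 ≤ n := by omega
  set φ := Real.arccos t with hφ
  have hcosφ : Real.cos φ = t := Real.cos_arccos ht.1 ht.2
  set c : ℝ := ((2:ℝ)^(n-1))⁻¹ with hc
  have hcpos : 0 < c := by positivity
  have hnotin : m - 1 ∉ Finset.Icc 1 (m-2) := by simp [Finset.mem_Icc]; omega
  have hprod : psiN m 0 t
      = ((t - 1)/(-1 - 1)) * ∏ l ∈ Finset.Icc 1 n, (t - Real.cos (thAng n l))/(-1 - Real.cos (thAng n l)) := by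
    unfold psiN
    rw [erase_zero_decomp hm, Finset.prod_insert hnotin, nodeN_zero, nodeN_last hm]
    congr 1
    apply Finset.prod_congr rfl
    intro l hl
    rw [Finset.mem_Icc] at hl
    rw [nodeN_int hm hl.1 hl.2]
  have hnum : ∏ l ∈ Finset.Icc 1 n, (t - Real.cos (thAng n l)) = c * Real.cos ((n:ℝ)*φ) := by
    rw [← hcosφ]; exact prod_cheb_cos n hn1 φ
  have hden : ∏ l ∈ Finset.Icc 1 n, (-1 - Real.cos (thAng n l)) = c * Real.cos ((n:ℝ)*Real.pi) := by
    have := prod_cheb_cos n hn1 Real.pi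
    rw [Real.cos_pi] at this
    exact this
  rw [hprod, Finset.prod_div_distrib, hnum, hden]
  rw [abs_mul, abs_div, abs_div, abs_mul, abs_mul, abs_cos_nat_pi]
  have h1 : |t - 1| ≤ 2 := by
    rw [abs_le]; constructor <;> [linarith [ht.1]; linarith [ht.2]]
  have h2 : |(-1:ℝ) - 1| = 2 := by norm_num
  have h3 : |Real.cos ((n:ℝ)*φ)| ≤ 1 := Real.abs_cos_le_one _
  rw [h2, abs_of_pos hcpos, mul_one, mul_comm c, mul_div_assoc,
    div_self (ne_of_gt hcpos), mul_one]
  have e1 : |t-1|/2 ≤ 1 := by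
    rw [div_le_one (by norm_num : (0:ℝ) < 2)]; exact h1
  exact mul_le_one₀ e1 (abs_nonneg _) h3

lemma psiN_last_bound {m : ℕ} (hm : 4 ≤ m) {t : ℝ} (ht : t ∈ Set.Icc (-1:ℝ) 1) :
    |psiN m (m-1) t| ≤ 1 := by
  set n := m - 2 with hn
  have hn1 : 1 ≤ n := by omega
  set φ := Real.arccos t with hφ
  have hcosφ : Real.cos φ = t := Real.cos_arccos ht.1 ht.2
  set c : ℝ := ((2:ℝ)^(n-1))⁻¹ with hc
  have hcpos : 0 < c := by positivity
  have hnotin : 0 ∉ Finset.Icc 1 (m-2) := by simp [Finset.mem_Icc]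
  have hprod : psiN m (m-1) t
      = ((t - (-1))/(1 - (-1))) * ∏ l ∈ Finset.Icc 1 n, (t - Real.cos (thAng n l))/(1 - Real.cos (thAng n l)) := by
    unfold psiN
    rw [erase_last_decomp hm, Finset.prod_insert hnotin, nodeN_zero, nodeN_last hm]
    congr 1
    apply Finset.prod_congr rfl
    intro l hl
    rw [Finset.mem_Icc] at hl
    rw [nodeN_int hm hl.1 hl.2]
  have hnum : ∏ l ∈ Finset.Icc 1 n, (t - Real.cos (thAng n l)) = c * Real.cos ((n:ℝ)*φ) := by
    rw [← hcosφ]; exact prod_cheb_cos n hn1 φ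
  have hden : ∏ l ∈ Finset.Icc 1 n, (1 - Real.cos (thAng n l)) = c := by
    have := prod_cheb_cos n hn1 0
    rw [Real.cos_zero] at this
    simpa using this
  rw [hprod, Finset.prod_div_distrib, hnum, hden]
  rw [abs_mul, abs_div, abs_div, abs_mul]
  have h1 : |t - (-1)| ≤ 2 := by
    rw [abs_le]; constructor <;> [linarith [ht.1]; linarith [ht.2]]
  have h2 : |(1:ℝ) - (-1)| = 2 := by norm_num
  have h3 : |Real.cos ((n:ℝ)*φ)| ≤ 1 := Real.abs_cos_le_one _
  rw [h2, abs_of_pos hcpos, mul_comm c, mul_div_assoc, div_self (ne_of_gt hcpos), mul_one]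
  have e1 : |t-(-1)|/2 ≤ 1 := by
    rw [div_le_one (by norm_num : (0:ℝ) < 2)]; exact h1
  exact mul_le_one₀ e1 (abs_nonneg _) h3

lemma psiN_int_bound {m k : ℕ} (hm : 4 ≤ m) (hk1 : 1 ≤ k) (hk2 : k ≤ m-2)
    {t : ℝ} (ht : t ∈ Set.Icc (-1:ℝ) 1) :
    |psiN m k t| ≤ Real.pi * ((m-2 : ℕ) : ℝ) := by
  set n := m - 2 with hn
  have hn1 : 1 ≤ n := by omega
  have hkIcc : k ∈ Finset.Icc 1 n := Finset.mem_Icc.mpr ⟨hk1, hk2⟩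
  have hθpos : 0 < thAng n k := thAng_pos hn1 hk1
  have hθlt : thAng n k < Real.pi := thAng_lt_pi hn1 hk2
  set θk := thAng n k with hθk
  set ck := Real.cos θk with hck
  have hsinθk : 0 < Real.sin θk := Real.sin_pos_of_pos_of_lt_pi hθpos hθlt
  have hπ3 := Real.pi_gt_three
  have hn' : (1:ℝ) ≤ (n:ℝ) := by exact_mod_cast hn1
  have hπn : (1:ℝ) ≤ Real.pi * (n:ℝ) := by nlinarith
  have hckne1 : ck ≠ 1 := by
    intro h
    have h' : Real.cos θk = Real.cos 0 := by rw [Real.cos_zero]; exact h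
    have := Real.injOn_cos ⟨hθpos.le, hθlt.le⟩ ⟨le_refl 0, Real.pi_pos.le⟩ h'
    exact (ne_of_gt hθpos) this
  have hckneg1 : ck ≠ -1 := by
    intro h
    have h' : Real.cos θk = Real.cos Real.pi := by rw [Real.cos_pi]; exact h
    have := Real.injOn_cos ⟨hθpos.le, hθlt.le⟩ ⟨Real.pi_pos.le, le_refl _⟩ h'
    exact (ne_of_lt hθlt) this
  rcases eq_or_ne t ck with rfl | hne
  · -- t is the node itself
    have hone : psiN m k ck = 1 := by
      unfold psiN
      apply Finset.prod_eq_one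
      intro l hl
      rw [Finset.mem_erase, Finset.mem_range] at hl
      have hnodek : nodeN m k = ck := by rw [nodeN_int hm hk1 hk2]
      have hnl : nodeN m l ≠ ck := by
        rcases eq_or_ne l 0 with rfl | hl0
        · rw [nodeN_zero]; exact fun h => hckneg1 h.symm
        · rcases eq_or_ne l (m-1) with rfl | hlm
          · rw [nodeN_last hm]; exact fun h => hckne1 h.symm
          · have hl1 : 1 ≤ l := by omega
            have hl2 : l ≤ m - 2 := by omega
            rw [nodeN_int hm hl1 hl2]
            intro h
            have hlIcc : thAng n l ∈ Set.Icc 0 Real.pi :=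
              ⟨(thAng_pos hn1 hl1).le, (thAng_lt_pi hn1 hl2).le⟩
            have := Real.injOn_cos hlIcc ⟨hθpos.le, hθlt.le⟩ h
            exact hl.1 (thAng_inj hn1 this)
      rw [hnodek, div_self (sub_ne_zero.mpr (fun h => hnl h.symm))]
    rw [hone, abs_one]
    exact hπn
  · set φ := Real.arccos t with hφ
    have hcosφ : Real.cos φ = t := Real.cos_arccos ht.1 ht.2
    have hφmem : φ ∈ Set.Icc 0 Real.pi := ⟨Real.arccos_nonneg t, Real.arccos_le_pi t⟩
    have hnecos : Real.cos φ ≠ Real.cos θk := by rw [hcosφ]; exact hne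
    set c : ℝ := ((2:ℝ)^(n-1))⁻¹ with hc
    have hcpos : 0 < c := by positivity
    set E := (Finset.Icc 1 n).erase k with hE
    set A := ∏ j ∈ E, (t - Real.cos (thAng n j)) with hA0
    set B := ∏ j ∈ E, (ck - Real.cos (thAng n j)) with hB0
    have h0notin : 0 ∉ insert (m-1) E := by
      simp only [Finset.mem_insert, hE, Finset.mem_erase, Finset.mem_Icc]
      omega
    have hlastnotin : m-1 ∉ E := by
      simp only [hE, Finset.mem_erase, Finset.mem_Icc]
      omega
    have hprod : psiN m k t
        = ((t - (-1))/(ck - (-1))) * (((t - 1)/(ck - 1)) * (A / B)) := by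
      unfold psiN
      rw [erase_int_decomp hm hk1 hk2, Finset.prod_insert h0notin,
        Finset.prod_insert hlastnotin, nodeN_zero, nodeN_last hm,
        nodeN_int hm hk1 hk2]
      congr 1
      congr 1
      rw [hA0, hB0, ← Finset.prod_div_distrib]
      apply Finset.prod_congr rfl
      intro j hj
      rw [hE, Finset.mem_erase, Finset.mem_Icc] at hj
      rw [nodeN_int hm hj.2.1 hj.2.2]
    have hfull : ∏ j ∈ Finset.Icc 1 n, (t - Real.cos (thAng n j))
        = c * Real.cos ((n:ℝ)*φ) := by
      rw [← hcosφ]; exact prod_cheb_cos n hn1 φ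
    have hAeq : (t - ck) * A = c * Real.cos ((n:ℝ)*φ) := by
      rw [← hfull, hA0, hE, hck, hθk]
      exact Finset.mul_prod_erase _ (fun j => t - Real.cos (thAng n j)) hkIcc
    have hBeq : B * Real.sin θk = c * (n:ℝ) * Real.sin ((n:ℝ) * θk) :=
      deriv_prod_node n hn1 hkIcc
    have htckne : |t - ck| ≠ 0 := abs_ne_zero.mpr (sub_ne_zero.mpr hne)
    have habsA : |A| = c * |Real.cos ((n:ℝ)*φ)| / |t - ck| := by
      have h' : |t - ck| * |A| = c * |Real.cos ((n:ℝ)*φ)| := by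
        rw [← abs_mul, hAeq, abs_mul, abs_of_pos hcpos]
      rw [eq_div_iff htckne, mul_comm]
      exact h'
    have habsB : |B| = c * (n:ℝ) / Real.sin θk := by
      have h' : |B| * Real.sin θk = c * (n:ℝ) := by
        have h2 := congrArg abs hBeq
        rw [abs_mul, abs_of_pos hsinθk, abs_mul, abs_sin_n_thAng hn1, mul_one,
          abs_mul, abs_of_pos hcpos, Nat.abs_cast] at h2
        exact h2
      rw [eq_div_iff (ne_of_gt hsinθk)]
      exact h'
    have h_tfac : |t - (-1)| * |t - 1| = Real.sin φ ^ 2 := by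
      rw [← abs_mul]
      have : (t - (-1))*(t-1) = -(Real.sin φ^2) := by
        rw [Real.sin_sq, hcosφ]; ring
      rw [this, abs_neg, abs_of_nonneg (sq_nonneg _)]
    have h_cfac : |ck - (-1)| * |ck - 1| = Real.sin θk ^ 2 := by
      rw [← abs_mul]
      have : (ck - (-1))*(ck-1) = -(Real.sin θk^2) := by
        rw [Real.sin_sq, hck]; ring
      rw [this, abs_neg, abs_of_nonneg (sq_nonneg _)]
    have hcalc : |psiN m k t|
        = Real.sin φ^2 * |Real.cos ((n:ℝ)*φ)|
            / ((n:ℝ) * Real.sin θk * |Real.cos φ - Real.cos θk|) := by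
      calc |psiN m k t|
          = ((|t - (-1)| * |t - 1|) * |A|) / ((|ck - (-1)| * |ck - 1|) * |B|) := by
            rw [hprod, abs_mul, abs_mul, abs_div, abs_div, abs_div]
            ring
        _ = (Real.sin φ^2 * (c * |Real.cos ((n:ℝ)*φ)| / |t - ck|))
              / (Real.sin θk^2 * (c * (n:ℝ) / Real.sin θk)) := by
            rw [h_tfac, h_cfac, habsA, habsB]
        _ = Real.sin φ^2 * |Real.cos ((n:ℝ)*φ)|
              / ((n:ℝ) * Real.sin θk * |Real.cos φ - Real.cos θk|) := by
            rw [hcosφ, ← hck]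
            have hn0 : (n:ℝ) ≠ 0 := by positivity
            field_simp
    rw [hcalc]
    exact key_ineq hn1 hφmem hθpos hθlt (cos_n_thAng hn1)
      (sin_thAng_lb hn1 hk1 hk2) hnecos

theorem lebesgue_constant_bound :
    ∃ C : ℝ, 0 < C ∧ ∀ a : ℝ, 0 < a → ∀ m : ℕ, 4 ≤ m →
      ∀ t ∈ Set.Icc (-a) a,
        ∑ i : Fin m, |lagrangeFund a m i t| ≤ C * (m : ℝ) ^ 2 * Real.log m := by
  refine ⟨6, by norm_num, ?_⟩
  intro a ha m hm t ht
  have hta : t/a ∈ Set.Icc (-1:ℝ) 1 := by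
    constructor
    · rw [le_div_iff₀ ha]; nlinarith [ht.1]
    · rw [div_le_one ha]; exact ht.2
  have hsum : ∑ i : Fin m, |lagrangeFund a m i t|
      = ∑ j ∈ Finset.range m, |psiN m j (t/a)| := by
    rw [← Fin.sum_univ_eq_sum_range (fun j => |psiN m j (t/a)|) m]
    apply Finset.sum_congr rfl
    intro i _
    rw [lagrangeFund_scale ha m i t, lagrangeFund_one_eq_psiN hm i (t/a)]
  rw [hsum]
  have h0notin : (0:ℕ) ∉ insert (m-1) (Finset.Icc 1 (m-2)) := by
    simp only [Finset.mem_insert, Finset.mem_Icc]; omega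
  have hlastnotin : m-1 ∉ Finset.Icc 1 (m-2) := by
    simp only [Finset.mem_Icc]; omega
  rw [range_decomp hm, Finset.sum_insert h0notin, Finset.sum_insert hlastnotin]
  have hcard : (Finset.Icc 1 (m-2)).card = m - 2 := by rw [Nat.card_Icc]; omega
  have hS : ∑ j ∈ Finset.Icc 1 (m-2), |psiN m j (t/a)|
      ≤ ((m-2:ℕ):ℝ) * (Real.pi * ((m-2:ℕ):ℝ)) := by
    have h := Finset.sum_le_card_nsmul (Finset.Icc 1 (m-2))
      (fun j => |psiN m j (t/a)|) (Real.pi * ((m-2:ℕ):ℝ))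
      (fun j hj => psiN_int_bound hm (Finset.mem_Icc.mp hj).1 (Finset.mem_Icc.mp hj).2 hta)
    rw [hcard, nsmul_eq_mul] at h
    exact h
  have h0 := psiN_zero_bound hm hta
  have hl := psiN_last_bound hm hta
  have hπ4 := Real.pi_le_four
  have hπ0 := Real.pi_pos
  have hm4 : (4:ℝ) ≤ (m:ℝ) := by exact_mod_cast hm
  have hnm : ((m-2:ℕ):ℝ) ≤ (m:ℝ) := by
    have : m - 2 ≤ m := by omega
    exact_mod_cast this
  have hn0 : (0:ℝ) ≤ ((m-2:ℕ):ℝ) := by positivity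
  have hlog : 1 ≤ Real.log m := by
    rw [Real.le_log_iff_exp_le (by positivity)]
    have := Real.exp_one_lt_d9
    linarith
  have hq : ((m-2:ℕ):ℝ) * (Real.pi * ((m-2:ℕ):ℝ)) ≤ 4 * ((m:ℝ) * (m:ℝ)) := by
    have h2 : ((m-2:ℕ):ℝ)*((m-2:ℕ):ℝ) ≤ (m:ℝ)*(m:ℝ) :=
      mul_le_mul hnm hnm hn0 (le_trans hn0 hnm)
    calc ((m-2:ℕ):ℝ) * (Real.pi * ((m-2:ℕ):ℝ))
        = Real.pi * (((m-2:ℕ):ℝ)*((m-2:ℕ):ℝ)) := by ring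
      _ ≤ 4 * ((m:ℝ)*(m:ℝ)) := by nlinarith [mul_nonneg hn0 hn0]
  have h6 : 6*(m:ℝ)^2 ≤ 6*(m:ℝ)^2*Real.log m := by nlinarith
  nlinarith
end

section
/- Let l ≥ 2 be an integer and v > 1 a real number. For N ≥ 2 define S_N = Σ_{k=0}^{N−1} ((N^v − k^v)/((k+1)^v − k^v))^{l−1}. Then there exist constants c₁, c₂ > 0 (depending only on l and v) such that for all N ≥ 2: if v > l/(l−1) then c₁·N^{v(l−1)} ≤ S_N ≤ c₂·N^{v(l−1)}; if v = l/(l−1) then c₁·N^l·ln N ≤ S_N ≤ c₂·N^l·ln N; and if v < l/(l−1) then c₁·N^l ≤ S_N ≤ c₂·N^l. -/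
open Finset Real

/-- The graded-mesh cell count `S_N = Σ_{k=0}^{N-1} ((N^v − k^v)/((k+1)^v − k^v))^{l−1}`. -/
noncomputable def gradedCellCount (l : ℕ) (v : ℝ) (N : ℕ) : ℝ :=
  ∑ k ∈ Finset.range N,
    (((N : ℝ) ^ v - (k : ℝ) ^ v) / (((k : ℝ) + 1) ^ v - (k : ℝ) ^ v)) ^ (l - 1)

section AuxLemmas


lemma aux_base_shift {α j : ℝ} (hα : 0 ≤ α) (hj : 1 ≤ j) :
    (2:ℝ) ^ (-α) * j ^ (-α) ≤ (j + 1) ^ (-α) := by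
  have h1 : j + 1 ≤ 2 * j := by linarith
  have h2 : ((2:ℝ) * j) ^ (-α) ≤ (j + 1) ^ (-α) :=
    Real.rpow_le_rpow_of_nonpos (by linarith) h1 (neg_nonpos.2 hα)
  rwa [Real.mul_rpow (by norm_num) (by linarith)] at h2

lemma aux_ident {α j : ℝ} (hj : 0 < j) :
    (j + 1) ^ α * j ^ (1 - α) = j * (1 + 1 / j) ^ α := by
  have h : j + 1 = j * (1 + 1 / j) := by field_simp
  rw [h, Real.mul_rpow hj.le (by positivity), mul_right_comm, ← Real.rpow_add hj]
  norm_num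

-- telescoping bound for α > 1
lemma aux_step_gt {α j : ℝ} (hα : 1 < α) (hj : 1 ≤ j) :
    j ^ (-α) ≤ 2 ^ α / (α - 1) * (j ^ (1 - α) - (j + 1) ^ (1 - α)) := by
  have hj0 : (0:ℝ) < j := by linarith
  have hbern : 1 + α * (1 / j) ≤ (1 + 1 / j) ^ α :=
    one_add_mul_self_le_rpow_one_add (le_trans (by norm_num : (-1:ℝ) ≤ 0) (by positivity)) hα.le
  have hA : j + α ≤ (j + 1) ^ α * j ^ (1 - α) := by
    rw [aux_ident hj0]
    have := mul_le_mul_of_nonneg_left hbern hj0.le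
    calc j + α = j * (1 + α * (1/j)) := by field_simp
    _ ≤ j * (1 + 1/j) ^ α := this
  -- hence j^(1-α) - (j+1)^(1-α) ≥ (α-1) * (j+1)^(-α)
  have hjp : (0:ℝ) < j + 1 := by linarith
  have hkey : (α - 1) * (j + 1) ^ (-α) ≤ j ^ (1 - α) - (j + 1) ^ (1 - α) := by
    have e1 : (j + 1) ^ (1 - α) = (j + 1) * (j + 1) ^ (-α) := by
      rw [show (1 - α) = 1 + (-α) by ring, Real.rpow_add hjp, Real.rpow_one]
    have e2 : j ^ (1 - α) = ((j + 1) ^ α * j ^ (1 - α)) * (j + 1) ^ (-α) := by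
      rw [mul_comm ((j+1)^α), mul_assoc, ← Real.rpow_add hjp]
      simp
    rw [e1, e2]
    have hp : (0:ℝ) < (j + 1) ^ (-α) := Real.rpow_pos_of_pos hjp _
    nlinarith [mul_le_mul_of_nonneg_right hA hp.le]
  have hshift : (2:ℝ) ^ (-α) * j ^ (-α) ≤ (j + 1) ^ (-α) := aux_base_shift (by linarith) hj
  have h2p : (0:ℝ) < (2:ℝ) ^ α := Real.rpow_pos_of_pos (by norm_num) _
  have h2n : (2:ℝ) ^ (-α) = ((2:ℝ) ^ α)⁻¹ := by
    rw [Real.rpow_neg (by norm_num)]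
  rw [div_mul_eq_mul_div, le_div_iff₀ (by linarith)]
  calc j ^ (-α) * (α - 1) ≤ ((2:ℝ)^α * (j+1)^(-α)) * (α - 1) := by
        have : j ^ (-α) ≤ (2:ℝ)^α * (j+1)^(-α) := by
          rw [h2n] at hshift
          calc j ^ (-α) = (2:ℝ)^α * (((2:ℝ)^α)⁻¹ * j ^ (-α)) := by field_simp
          _ ≤ (2:ℝ)^α * (j+1)^(-α) := by
              exact mul_le_mul_of_nonneg_left hshift h2p.le
        exact mul_le_mul_of_nonneg_right this (by linarith)
  _ = (2:ℝ)^α * ((α - 1) * (j+1)^(-α)) := by ring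
  _ ≤ 2 ^ α * (j ^ (1 - α) - (j + 1) ^ (1 - α)) := by
        exact mul_le_mul_of_nonneg_left hkey h2p.le

-- telescoping bound for α < 1
lemma aux_step_lt {α j : ℝ} (hα0 : 0 < α) (hα : α < 1) (hj : 1 ≤ j) :
    j ^ (-α) ≤ 2 ^ α / (1 - α) * ((j + 1) ^ (1 - α) - j ^ (1 - α)) := by
  have hj0 : (0:ℝ) < j := by linarith
  have hbern : (1 + 1 / j) ^ α ≤ 1 + α * (1 / j) :=
    rpow_one_add_le_one_add_mul_self (le_trans (by norm_num : (-1:ℝ) ≤ 0) (by positivity)) hα0.le hα.le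
  have hA : (j + 1) ^ α * j ^ (1 - α) ≤ j + α := by
    rw [aux_ident hj0]
    calc j * (1 + 1/j) ^ α ≤ j * (1 + α * (1/j)) :=
          mul_le_mul_of_nonneg_left hbern hj0.le
    _ = j + α := by field_simp
  have hjp : (0:ℝ) < j + 1 := by linarith
  have hkey : (1 - α) * (j + 1) ^ (-α) ≤ (j + 1) ^ (1 - α) - j ^ (1 - α) := by
    have e1 : (j + 1) ^ (1 - α) = (j + 1) * (j + 1) ^ (-α) := by
      rw [show (1 - α) = 1 + (-α) by ring, Real.rpow_add hjp, Real.rpow_one]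
    have e2 : j ^ (1 - α) = ((j + 1) ^ α * j ^ (1 - α)) * (j + 1) ^ (-α) := by
      rw [mul_comm ((j+1)^α), mul_assoc, ← Real.rpow_add hjp]
      simp
    rw [e1, e2]
    have hp : (0:ℝ) < (j + 1) ^ (-α) := Real.rpow_pos_of_pos hjp _
    nlinarith [mul_le_mul_of_nonneg_right hA hp.le]
  have hshift : (2:ℝ) ^ (-α) * j ^ (-α) ≤ (j + 1) ^ (-α) := aux_base_shift hα0.le hj
  have h2p : (0:ℝ) < (2:ℝ) ^ α := Real.rpow_pos_of_pos (by norm_num) _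
  have h2n : (2:ℝ) ^ (-α) = ((2:ℝ) ^ α)⁻¹ := by
    rw [Real.rpow_neg (by norm_num)]
  rw [div_mul_eq_mul_div, le_div_iff₀ (by linarith)]
  calc j ^ (-α) * (1 - α) ≤ ((2:ℝ)^α * (j+1)^(-α)) * (1 - α) := by
        have : j ^ (-α) ≤ (2:ℝ)^α * (j+1)^(-α) := by
          rw [h2n] at hshift
          calc j ^ (-α) = (2:ℝ)^α * (((2:ℝ)^α)⁻¹ * j ^ (-α)) := by field_simp
          _ ≤ (2:ℝ)^α * (j+1)^(-α) := mul_le_mul_of_nonneg_left hshift h2p.le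
        exact mul_le_mul_of_nonneg_right this (by linarith)
  _ = (2:ℝ)^α * ((1 - α) * (j+1)^(-α)) := by ring
  _ ≤ 2 ^ α * ((j + 1) ^ (1 - α) - j ^ (1 - α)) := mul_le_mul_of_nonneg_left hkey h2p.le

lemma cast_one_le (k : ℕ) : (1:ℝ) ≤ (k:ℝ) + 1 := by
  have : (0:ℝ) ≤ (k:ℝ) := Nat.cast_nonneg k
  linarith

lemma sum_rpow_le_of_one_lt {α : ℝ} (hα : 1 < α) (N : ℕ) :
    ∑ k ∈ range N, ((k:ℝ) + 1) ^ (-α) ≤ 2 ^ α / (α - 1) := by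
  have hC : (0:ℝ) ≤ 2 ^ α / (α - 1) :=
    div_nonneg (Real.rpow_nonneg (by norm_num) _) (by linarith)
  have h1 : ∑ k ∈ range N, ((k:ℝ) + 1) ^ (-α)
      ≤ ∑ k ∈ range N, 2 ^ α / (α - 1) *
        ((fun k : ℕ => ((k:ℝ) + 1) ^ (1 - α)) k - (fun k : ℕ => ((k:ℝ) + 1) ^ (1 - α)) (k + 1)) := by
    apply Finset.sum_le_sum
    intro k _
    have h := aux_step_gt hα (cast_one_le k)
    have e : ((k + 1 : ℕ):ℝ) + 1 = ((k:ℝ) + 1) + 1 := by push_cast; ring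
    simp only [e]
    exact h
  rw [← Finset.mul_sum, Finset.sum_range_sub' (fun k : ℕ => ((k:ℝ) + 1) ^ (1 - α)) N] at h1
  simp only [Nat.cast_zero, zero_add, Real.one_rpow] at h1
  refine h1.trans ?_
  have h2 : (0:ℝ) ≤ ((N:ℝ) + 1) ^ (1 - α) := Real.rpow_nonneg (by positivity) _
  nlinarith

lemma sum_rpow_le_of_lt_one {α : ℝ} (hα0 : 0 < α) (hα : α < 1) (N : ℕ) :
    ∑ k ∈ range N, ((k:ℝ) + 1) ^ (-α) ≤ 2 ^ α / (1 - α) * ((N:ℝ) + 1) ^ (1 - α) := by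
  have hC : (0:ℝ) ≤ 2 ^ α / (1 - α) :=
    div_nonneg (Real.rpow_nonneg (by norm_num) _) (by linarith)
  have h1 : ∑ k ∈ range N, ((k:ℝ) + 1) ^ (-α)
      ≤ ∑ k ∈ range N, 2 ^ α / (1 - α) *
        ((fun k : ℕ => ((k:ℝ) + 1) ^ (1 - α)) (k + 1) - (fun k : ℕ => ((k:ℝ) + 1) ^ (1 - α)) k) := by
    apply Finset.sum_le_sum
    intro k _
    have h := aux_step_lt hα0 hα (cast_one_le k)
    have e : ((k + 1 : ℕ):ℝ) + 1 = ((k:ℝ) + 1) + 1 := by push_cast; ring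
    simp only [e]
    exact h
  rw [← Finset.mul_sum, Finset.sum_range_sub (fun k : ℕ => ((k:ℝ) + 1) ^ (1 - α)) N] at h1
  simp only [Nat.cast_zero, zero_add, Real.one_rpow] at h1
  refine h1.trans ?_
  nlinarith

lemma harm_le (N : ℕ) (hN : 1 ≤ N) :
    ∑ k ∈ range N, ((k:ℝ) + 1) ^ (-(1:ℝ)) ≤ 1 + Real.log N := by
  obtain ⟨n, rfl⟩ : ∃ n, N = n + 1 := ⟨N - 1, by omega⟩
  rw [Finset.sum_range_succ' (fun k : ℕ => ((k:ℝ) + 1) ^ (-(1:ℝ)))]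
  have h0 : (((0:ℕ):ℝ) + 1) ^ (-(1:ℝ)) = 1 := by norm_num
  rw [h0]
  have h1 : ∑ k ∈ range n, (((k + 1 : ℕ):ℝ) + 1) ^ (-(1:ℝ))
      ≤ ∑ k ∈ range n, ((fun k : ℕ => Real.log ((k:ℝ) + 1)) (k + 1)
        - (fun k : ℕ => Real.log ((k:ℝ) + 1)) k) := by
    apply Finset.sum_le_sum
    intro k _
    have hlog : Real.log (((k:ℝ) + 1) / ((k:ℝ) + 2)) ≤ ((k:ℝ) + 1) / ((k:ℝ) + 2) - 1 :=
      Real.log_le_sub_one_of_pos (by positivity)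
    rw [Real.log_div (by positivity) (by positivity)] at hlog
    have he : ((k:ℝ) + 1) / ((k:ℝ) + 2) - 1 = -(1 / ((k:ℝ) + 2)) := by
      field_simp
      norm_num
    rw [he] at hlog
    have e1 : ((k + 1 : ℕ):ℝ) + 1 = (k:ℝ) + 2 := by push_cast; ring
    simp only [e1, Real.rpow_neg_one]
    have e2 : ((k:ℝ) + 2)⁻¹ = 1 / ((k:ℝ) + 2) := (one_div _).symm
    rw [e2]
    linarith
  rw [Finset.sum_range_sub (fun k : ℕ => Real.log ((k:ℝ) + 1)) n] at h1
  simp only [Nat.cast_zero, zero_add, Real.log_one, sub_zero] at h1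
  have e3 : Real.log ((n:ℝ) + 1) = Real.log ((n + 1 : ℕ):ℝ) := by push_cast; ring_nf
  rw [e3] at h1
  linarith

lemma harm_ge (M : ℕ) :
    Real.log ((M:ℝ) + 1) ≤ ∑ k ∈ range M, ((k:ℝ) + 1) ^ (-(1:ℝ)) := by
  have h1 : ∑ k ∈ range M, ((fun k : ℕ => Real.log ((k:ℝ) + 1)) (k + 1)
      - (fun k : ℕ => Real.log ((k:ℝ) + 1)) k) ≤ ∑ k ∈ range M, ((k:ℝ) + 1) ^ (-(1:ℝ)) := by
    apply Finset.sum_le_sum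
    intro k _
    have hlog : Real.log (((k:ℝ) + 2) / ((k:ℝ) + 1)) ≤ ((k:ℝ) + 2) / ((k:ℝ) + 1) - 1 :=
      Real.log_le_sub_one_of_pos (by positivity)
    rw [Real.log_div (by positivity) (by positivity)] at hlog
    have he : ((k:ℝ) + 2) / ((k:ℝ) + 1) - 1 = 1 / ((k:ℝ) + 1) := by
      field_simp
      norm_num
    rw [he] at hlog
    have e1 : ((k + 1 : ℕ):ℝ) + 1 = (k:ℝ) + 2 := by push_cast; ring
    simp only [e1, Real.rpow_neg_one]
    rw [show ((k:ℝ) + 1)⁻¹ = 1 / ((k:ℝ) + 1) from (one_div _).symm]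
    linarith
  rw [Finset.sum_range_sub (fun k : ℕ => Real.log ((k:ℝ) + 1)) M] at h1
  simp only [Nat.cast_zero, zero_add, Real.log_one, sub_zero] at h1
  exact h1

lemma sum_rpow_ge {α : ℝ} (hα : 0 ≤ α) (M : ℕ) (hM : 1 ≤ M) :
    (M:ℝ) ^ (1 - α) ≤ ∑ k ∈ range M, ((k:ℝ) + 1) ^ (-α) := by
  have hM0 : (0:ℝ) < (M:ℝ) := by exact_mod_cast hM
  have h1 : ∀ k ∈ range M, (M:ℝ) ^ (-α) ≤ ((k:ℝ) + 1) ^ (-α) := by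
    intro k hk
    have hk' : (k:ℝ) + 1 ≤ M := by
      have := Finset.mem_range.mp hk
      exact_mod_cast Nat.succ_le_of_lt this
    exact Real.rpow_le_rpow_of_nonpos (by positivity) hk' (neg_nonpos.2 hα)
  calc (M:ℝ) ^ (1 - α) = (M:ℝ) * (M:ℝ) ^ (-α) := by
        rw [show (1 - α) = 1 + (-α) by ring, Real.rpow_add hM0, Real.rpow_one]
  _ = ∑ _k ∈ range M, (M:ℝ) ^ (-α) := by
        rw [Finset.sum_const, Finset.card_range, nsmul_eq_mul]
  _ ≤ ∑ k ∈ range M, ((k:ℝ) + 1) ^ (-α) := Finset.sum_le_sum h1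

lemma one_le_sum_rpow {α : ℝ} (M : ℕ) (hM : 1 ≤ M) :
    (1:ℝ) ≤ ∑ k ∈ range M, ((k:ℝ) + 1) ^ (-α) := by
  have h0 : (0:ℕ) ∈ range M := Finset.mem_range.mpr hM
  have := Finset.single_le_sum (f := fun k : ℕ => ((k:ℝ) + 1) ^ (-α))
    (fun k _ => Real.rpow_nonneg (by positivity) _) h0
  simpa using this


lemma pow_v_le {v : ℝ} (hv : 1 ≤ v) {x y : ℝ} (hx : 0 ≤ x) (hxy : x ≤ y) (hy : 0 < y) :
    x ^ v ≤ x * y ^ (v - 1) := by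
  rcases eq_or_lt_of_le hx with h0 | hx0
  · rw [← h0, Real.zero_rpow (by linarith : v ≠ 0)]
    have : (0:ℝ) ≤ y ^ (v - 1) := Real.rpow_nonneg hy.le _
    simp
  · have e : x ^ v = x * x ^ (v - 1) := by
      nth_rewrite 1 [show v = 1 + (v - 1) by ring]
      rw [Real.rpow_add hx0, Real.rpow_one]
    rw [e]
    exact mul_le_mul_of_nonneg_left (Real.rpow_le_rpow hx0.le hxy (by linarith)) hx0.le

lemma denom_lb {v : ℝ} (hv : 1 ≤ v) (k : ℕ) :
    ((k:ℝ) + 1) ^ (v - 1) ≤ ((k:ℝ) + 1) ^ v - (k:ℝ) ^ v := by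
  have hK : (0:ℝ) < (k:ℝ) + 1 := by positivity
  have h1 : (k:ℝ) ^ v ≤ (k:ℝ) * ((k:ℝ) + 1) ^ (v - 1) :=
    pow_v_le hv (Nat.cast_nonneg k) (by linarith) hK
  have h2 : ((k:ℝ) + 1) ^ v = ((k:ℝ) + 1) * ((k:ℝ) + 1) ^ (v - 1) := by
    nth_rewrite 1 [show v = 1 + (v - 1) by ring]
    rw [Real.rpow_add hK, Real.rpow_one]
  nlinarith [Real.rpow_nonneg hK.le (v - 1)]

lemma denom_pos {v : ℝ} (hv : 1 ≤ v) (k : ℕ) :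
    (0:ℝ) < ((k:ℝ) + 1) ^ v - (k:ℝ) ^ v :=
  lt_of_lt_of_le (Real.rpow_pos_of_pos (by positivity) _) (denom_lb hv k)

lemma denom_ub {v : ℝ} (hv : 1 ≤ v) (k : ℕ) :
    ((k:ℝ) + 1) ^ v - (k:ℝ) ^ v ≤ v * ((k:ℝ) + 1) ^ (v - 1) := by
  have hK : (0:ℝ) < (k:ℝ) + 1 := by positivity
  have hK1 : (1:ℝ) ≤ (k:ℝ) + 1 := by
    have : (0:ℝ) ≤ (k:ℝ) := Nat.cast_nonneg k
    linarith
  have hs : (-1:ℝ) ≤ -(1 / ((k:ℝ) + 1)) := by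
    rw [neg_le_neg_iff]
    exact div_le_one_of_le₀ hK1 hK.le
  have hbern := one_add_mul_self_le_rpow_one_add hs hv
  have he : (1:ℝ) + -(1 / ((k:ℝ) + 1)) = (k:ℝ) / ((k:ℝ) + 1) := by
    field_simp
    ring
  rw [he] at hbern
  rw [Real.div_rpow (Nat.cast_nonneg k) hK.le] at hbern
  have hKv : (0:ℝ) < ((k:ℝ) + 1) ^ v := Real.rpow_pos_of_pos hK _
  have hmul := mul_le_mul_of_nonneg_right hbern hKv.le
  have e2 : (k:ℝ) ^ v / ((k:ℝ) + 1) ^ v * ((k:ℝ) + 1) ^ v = (k:ℝ) ^ v := by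
    field_simp
  rw [e2] at hmul
  have e3 : ((k:ℝ) + 1) ^ v * (1 / ((k:ℝ) + 1)) = ((k:ℝ) + 1) ^ (v - 1) := by
    rw [Real.rpow_sub hK, Real.rpow_one]
    ring
  nlinarith [hmul, e3]

lemma term_ub {v : ℝ} (hv : 1 < v) (m N k : ℕ) (hkN : k ≤ N) :
    (((N:ℝ) ^ v - (k:ℝ) ^ v) / (((k:ℝ) + 1) ^ v - (k:ℝ) ^ v)) ^ m
      ≤ ((N:ℝ) ^ v) ^ m * ((k:ℝ) + 1) ^ (-((v - 1) * (m:ℝ))) := by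
  have hK : (0:ℝ) < (k:ℝ) + 1 := by positivity
  have hb_low := denom_lb hv.le k
  have hb_pos := denom_pos hv.le k
  have hKv1 : (0:ℝ) < ((k:ℝ) + 1) ^ (v - 1) := Real.rpow_pos_of_pos hK _
  have ha_nonneg : (0:ℝ) ≤ (N:ℝ) ^ v - (k:ℝ) ^ v := by
    have : (k:ℝ) ^ v ≤ (N:ℝ) ^ v :=
      Real.rpow_le_rpow (Nat.cast_nonneg k) (by exact_mod_cast hkN) (by linarith)
    linarith
  have ha_ub : (N:ℝ) ^ v - (k:ℝ) ^ v ≤ (N:ℝ) ^ v := by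
    have : (0:ℝ) ≤ (k:ℝ) ^ v := Real.rpow_nonneg (Nat.cast_nonneg k) _
    linarith
  have hNv : (0:ℝ) ≤ (N:ℝ) ^ v := Real.rpow_nonneg (Nat.cast_nonneg N) _
  have hdiv : ((N:ℝ) ^ v - (k:ℝ) ^ v) / (((k:ℝ) + 1) ^ v - (k:ℝ) ^ v)
      ≤ (N:ℝ) ^ v / ((k:ℝ) + 1) ^ (v - 1) :=
    div_le_div₀ hNv ha_ub hKv1 hb_low
  calc (((N:ℝ) ^ v - (k:ℝ) ^ v) / (((k:ℝ) + 1) ^ v - (k:ℝ) ^ v)) ^ m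
      ≤ ((N:ℝ) ^ v / ((k:ℝ) + 1) ^ (v - 1)) ^ m :=
        pow_le_pow_left₀ (div_nonneg ha_nonneg hb_pos.le) hdiv m
  _ = ((N:ℝ) ^ v) ^ m * ((k:ℝ) + 1) ^ (-((v - 1) * (m:ℝ))) := by
        rw [div_pow, ← Real.rpow_natCast (((k:ℝ) + 1) ^ (v - 1)) m,
          ← Real.rpow_mul hK.le, div_eq_mul_inv, ← Real.rpow_neg hK.le]

lemma term_lb {v : ℝ} (hv : 1 < v) (m N k : ℕ) (hkN : k ≤ N)
    (h2 : (N:ℝ) / 2 ≤ (N:ℝ) - (k:ℝ)) (hN : 1 ≤ N) :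
    ((N:ℝ) ^ v / (2 * v)) ^ m * ((k:ℝ) + 1) ^ (-((v - 1) * (m:ℝ)))
      ≤ (((N:ℝ) ^ v - (k:ℝ) ^ v) / (((k:ℝ) + 1) ^ v - (k:ℝ) ^ v)) ^ m := by
  have hK : (0:ℝ) < (k:ℝ) + 1 := by positivity
  have hN0 : (0:ℝ) < (N:ℝ) := by exact_mod_cast hN
  have hb_pos := denom_pos hv.le k
  have hb_ub := denom_ub hv.le k
  have hKv1 : (0:ℝ) < ((k:ℝ) + 1) ^ (v - 1) := Real.rpow_pos_of_pos hK _
  have ha_lb : (N:ℝ) ^ v / 2 ≤ (N:ℝ) ^ v - (k:ℝ) ^ v := by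
    have h1 : (k:ℝ) ^ v ≤ (k:ℝ) * (N:ℝ) ^ (v - 1) :=
      pow_v_le hv.le (Nat.cast_nonneg k) (by exact_mod_cast hkN) hN0
    have h2' : (N:ℝ) ^ v = (N:ℝ) * (N:ℝ) ^ (v - 1) := by
      nth_rewrite 1 [show v = 1 + (v - 1) by ring]
      rw [Real.rpow_add hN0, Real.rpow_one]
    have h3 : ((N:ℝ) / 2) * (N:ℝ) ^ (v - 1) ≤ ((N:ℝ) - (k:ℝ)) * (N:ℝ) ^ (v - 1) :=
      mul_le_mul_of_nonneg_right h2 (Real.rpow_nonneg hN0.le _)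
    nlinarith
  have hdiv : ((N:ℝ) ^ v / 2) / (v * ((k:ℝ) + 1) ^ (v - 1))
      ≤ ((N:ℝ) ^ v - (k:ℝ) ^ v) / (((k:ℝ) + 1) ^ v - (k:ℝ) ^ v) :=
    div_le_div₀ (by linarith [Real.rpow_nonneg hN0.le v, (Real.rpow_pos_of_pos hN0 v)])
      ha_lb hb_pos hb_ub
  have hbase : ((N:ℝ) ^ v / 2) / (v * ((k:ℝ) + 1) ^ (v - 1))
      = ((N:ℝ) ^ v / (2 * v)) * ((k:ℝ) + 1) ^ (-(v - 1)) := by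
    rw [Real.rpow_neg hK.le, div_div,
      show (2:ℝ) * (v * ((k:ℝ) + 1) ^ (v - 1)) = 2 * v * ((k:ℝ) + 1) ^ (v - 1) by ring,
      ← div_div, div_eq_mul_inv]
  have hbnn : (0:ℝ) ≤ ((N:ℝ) ^ v / (2 * v)) * ((k:ℝ) + 1) ^ (-(v - 1)) := by
    have := Real.rpow_nonneg hN0.le v
    have := Real.rpow_nonneg hK.le (-(v - 1))
    positivity
  calc ((N:ℝ) ^ v / (2 * v)) ^ m * ((k:ℝ) + 1) ^ (-((v - 1) * (m:ℝ)))
      = (((N:ℝ) ^ v / (2 * v)) * ((k:ℝ) + 1) ^ (-(v - 1))) ^ m := by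
        rw [mul_pow, ← Real.rpow_natCast (((k:ℝ) + 1) ^ (-(v - 1))) m,
          ← Real.rpow_mul hK.le]
        ring_nf
  _ ≤ (((N:ℝ) ^ v - (k:ℝ) ^ v) / (((k:ℝ) + 1) ^ v - (k:ℝ) ^ v)) ^ m := by
        rw [← hbase]
        exact pow_le_pow_left₀ (by rw [hbase]; exact hbnn) hdiv m

end AuxLemmas

theorem graded_cell_count_asymptotics (l : ℕ) (hl : 2 ≤ l) (v : ℝ) (hv : 1 < v) :
    ∃ c₁ c₂ : ℝ, 0 < c₁ ∧ 0 < c₂ ∧ ∀ N : ℕ, 2 ≤ N →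
      (v > l / (l - 1 : ℝ) →
        c₁ * (N : ℝ) ^ (v * (l - 1 : ℝ)) ≤ gradedCellCount l v N ∧
        gradedCellCount l v N ≤ c₂ * (N : ℝ) ^ (v * (l - 1 : ℝ))) ∧
      (v = l / (l - 1 : ℝ) →
        c₁ * ((N : ℝ) ^ l * Real.log N) ≤ gradedCellCount l v N ∧
        gradedCellCount l v N ≤ c₂ * ((N : ℝ) ^ l * Real.log N)) ∧
      (v < l / (l - 1 : ℝ) →
        c₁ * (N : ℝ) ^ l ≤ gradedCellCount l v N ∧
        gradedCellCount l v N ≤ c₂ * (N : ℝ) ^ l) := by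
  have hl2 : (2:ℝ) ≤ (l:ℝ) := by exact_mod_cast hl
  have hl0 : (0:ℝ) < (l:ℝ) - 1 := by linarith
  have hmcast : (((l - 1 : ℕ)):ℝ) = (l:ℝ) - 1 := by
    rw [Nat.cast_sub (by omega)]; norm_num
  set α := (v - 1) * ((l:ℝ) - 1) with hαdef
  have hα0 : 0 < α := by rw [hαdef]; exact mul_pos (by linarith) hl0
  have hαm : (v - 1) * (((l - 1 : ℕ)):ℝ) = α := by rw [hmcast, hαdef]
  have he : α - 1 = v * ((l:ℝ) - 1) - (l:ℝ) := by rw [hαdef]; ring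
  have hv0 : 0 < v := by linarith
  -- generic per-N facts, as a local lemma
  have hNfacts : ∀ N : ℕ, 2 ≤ N →
      (0:ℝ) < (N:ℝ) ∧
      gradedCellCount l v N ≤ ((N:ℝ)^v)^(l-1) * ∑ k ∈ range N, ((k:ℝ)+1)^(-α) ∧
      ((N:ℝ)^v/(2*v))^(l-1) * ∑ k ∈ range (N/2), ((k:ℝ)+1)^(-α) ≤ gradedCellCount l v N ∧
      ((N:ℝ)^v)^(l-1) = (N:ℝ)^(v*((l:ℝ)-1)) ∧
      ((N:ℝ)^v/(2*v))^(l-1) = ((N:ℝ)^v)^(l-1) * ((1:ℝ)/(2*v))^(l-1) := by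
    intro N hN2
    have hN0 : 0 < N := by omega
    have hNR : (0:ℝ) < (N:ℝ) := by exact_mod_cast hN0
    refine ⟨hNR, ?_, ?_, ?_, ?_⟩
    · simp only [gradedCellCount]
      rw [Finset.mul_sum]
      apply Finset.sum_le_sum
      intro k hk
      have h := term_ub hv (l-1) N k (le_of_lt (Finset.mem_range.mp hk))
      rwa [hαm] at h
    · simp only [gradedCellCount]
      rw [Finset.mul_sum]
      have hsub : range (N/2) ⊆ range N := by
        intro x hx
        simp only [Finset.mem_range] at *
        omega
      refine le_trans (Finset.sum_le_sum ?_) (Finset.sum_le_sum_of_subset_of_nonneg hsub ?_)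
      · intro k hk
        have hkM := Finset.mem_range.mp hk
        have hkN : k ≤ N := by omega
        have h2 : (N:ℝ)/2 ≤ (N:ℝ) - (k:ℝ) := by
          have h3 : 2 * (k + 1) ≤ N := by omega
          have h4 : ((2 * (k + 1) : ℕ):ℝ) ≤ (N:ℝ) := by exact_mod_cast h3
          push_cast at h4
          linarith
        have h := term_lb hv (l-1) N k hkN h2 (by omega)
        rwa [hαm] at h
      · intro k hkN _
        have hk' : k ≤ N := le_of_lt (Finset.mem_range.mp hkN)
        apply pow_nonneg
        apply div_nonneg
        · have : (k:ℝ)^v ≤ (N:ℝ)^v :=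
            Real.rpow_le_rpow (Nat.cast_nonneg k) (by exact_mod_cast hk') (by linarith)
          linarith
        · exact (denom_pos hv.le k).le
    · rw [← Real.rpow_natCast ((N:ℝ)^v) (l-1), ← Real.rpow_mul hNR.le, hmcast]
    · rw [div_eq_mul_one_div, mul_pow]
  have hPnn : ∀ N : ℕ, (0:ℝ) ≤ ((N:ℝ)^v)^(l-1) :=
    fun N => pow_nonneg (Real.rpow_nonneg (Nat.cast_nonneg N) _) _
  have hQnn : ∀ N : ℕ, (0:ℝ) ≤ ((N:ℝ)^v/(2*v))^(l-1) :=
    fun N => pow_nonneg (div_nonneg (Real.rpow_nonneg (Nat.cast_nonneg N) _) (by linarith)) _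
  rcases lt_trichotomy α 1 with hc | hc | hc
  -- ================= case α < 1 : v < l/(l-1) =================
  · refine ⟨(1/(2*v))^(l-1) * (4:ℝ)^(α-1), 2^α/(1-α) * (2:ℝ)^(1-α), ?_, ?_, ?_⟩
    · have := Real.rpow_pos_of_pos (show (0:ℝ) < 4 by norm_num) (α-1)
      positivity
    · have h1 := Real.rpow_pos_of_pos (show (0:ℝ) < 2 by norm_num) α
      have h2 := Real.rpow_pos_of_pos (show (0:ℝ) < 2 by norm_num) (1-α)
      have : (0:ℝ) < 1 - α := by linarith
      positivity
    intro N hN2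
    obtain ⟨hNR, hub, hlb, hP, hC0⟩ := hNfacts N hN2
    have hM1 : 1 ≤ N/2 := by omega
    have hexp : v*((l:ℝ)-1) + (1-α) = (l:ℝ) := by rw [hαdef]; ring
    have hcomb : (N:ℝ)^(v*((l:ℝ)-1)) * (N:ℝ)^(1-α) = (N:ℝ)^l := by
      rw [← Real.rpow_add hNR, hexp, Real.rpow_natCast]
    refine ⟨?_, ?_, fun _ => ⟨?_, ?_⟩⟩
    · intro h
      exfalso
      rw [gt_iff_lt, div_lt_iff₀ hl0] at h
      linarith
    · intro h
      exfalso
      rw [eq_div_iff hl0.ne'] at h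
      linarith
    -- lower bound
    · have hM4 : (N:ℝ)/4 ≤ ((N/2 : ℕ):ℝ) := by
        have h3 : N ≤ 4 * (N/2) := by omega
        have h4 : (N:ℝ) ≤ ((4 * (N/2) : ℕ):ℝ) := by exact_mod_cast h3
        push_cast at h4
        linarith
      have hsum : ((N:ℝ)/4)^(1-α) ≤ ∑ k ∈ range (N/2), ((k:ℝ)+1)^(-α) :=
        le_trans (Real.rpow_le_rpow (by positivity) hM4 (by linarith))
          (sum_rpow_ge hα0.le (N/2) hM1)
      have e4 : (4:ℝ)^(α-1) = ((4:ℝ)^(1-α))⁻¹ := by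
        rw [show α-1 = -(1-α) by ring, Real.rpow_neg (by norm_num)]
      have ediv : (N:ℝ)^(1-α) * (4:ℝ)^(α-1) = ((N:ℝ)/4)^(1-α) := by
        rw [Real.div_rpow hNR.le (by norm_num), e4, div_eq_mul_inv]
      calc (1/(2*v))^(l-1) * (4:ℝ)^(α-1) * (N:ℝ)^l
          = ((N:ℝ)^v/(2*v))^(l-1) * ((N:ℝ)^(1-α) * (4:ℝ)^(α-1)) := by
            rw [hC0, hP, ← hcomb]; ring
        _ = ((N:ℝ)^v/(2*v))^(l-1) * ((N:ℝ)/4)^(1-α) := by rw [ediv]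
        _ ≤ ((N:ℝ)^v/(2*v))^(l-1) * ∑ k ∈ range (N/2), ((k:ℝ)+1)^(-α) :=
            mul_le_mul_of_nonneg_left hsum (hQnn N)
        _ ≤ gradedCellCount l v N := hlb
    -- upper bound
    · have hN1 : ((N:ℝ)+1) ≤ 2*(N:ℝ) := by
        have : (1:ℝ) ≤ (N:ℝ) := by exact_mod_cast (by omega : 1 ≤ N)
        linarith
      have h2N : ((N:ℝ)+1)^(1-α) ≤ (2:ℝ)^(1-α) * (N:ℝ)^(1-α) := by
        have h := Real.rpow_le_rpow (by positivity) hN1 (by linarith : (0:ℝ) ≤ 1-α)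
        rwa [Real.mul_rpow (by norm_num) hNR.le] at h
      have hC : (0:ℝ) ≤ 2^α/(1-α) :=
        div_nonneg (Real.rpow_nonneg (by norm_num) _) (by linarith)
      calc gradedCellCount l v N
          ≤ ((N:ℝ)^v)^(l-1) * ∑ k ∈ range N, ((k:ℝ)+1)^(-α) := hub
        _ ≤ ((N:ℝ)^v)^(l-1) * (2^α/(1-α) * ((N:ℝ)+1)^(1-α)) :=
            mul_le_mul_of_nonneg_left (sum_rpow_le_of_lt_one hα0 hc N) (hPnn N)
        _ ≤ ((N:ℝ)^v)^(l-1) * (2^α/(1-α) * ((2:ℝ)^(1-α) * (N:ℝ)^(1-α))) :=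
            mul_le_mul_of_nonneg_left (mul_le_mul_of_nonneg_left h2N hC) (hPnn N)
        _ = 2^α/(1-α) * (2:ℝ)^(1-α) * ((N:ℝ)^(v*((l:ℝ)-1)) * (N:ℝ)^(1-α)) := by
            rw [hP]; ring
        _ = 2^α/(1-α) * (2:ℝ)^(1-α) * (N:ℝ)^l := by rw [hcomb]
  -- ================= case α = 1 : v = l/(l-1) =================
  · have hveq : v * ((l:ℝ)-1) = (l:ℝ) := by linarith
    refine ⟨(1/(2*v))^(l-1) * (1/2), 1 + 1/Real.log 2, ?_, ?_, ?_⟩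
    · positivity
    · have := Real.log_pos (by norm_num : (1:ℝ) < 2)
      positivity
    intro N hN2
    obtain ⟨hNR, hub, hlb, hP, hC0⟩ := hNfacts N hN2
    rw [hc] at hub hlb
    have hM1 : 1 ≤ N/2 := by omega
    have hNl : (N:ℝ)^(v*((l:ℝ)-1)) = (N:ℝ)^l := by rw [hveq, Real.rpow_natCast]
    have hlog2 : 0 < Real.log 2 := Real.log_pos (by norm_num)
    have hlogN : Real.log 2 ≤ Real.log N :=
      Real.log_le_log (by norm_num) (by exact_mod_cast hN2)
    have hlogN0 : 0 < Real.log N := lt_of_lt_of_le hlog2 hlogN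
    refine ⟨?_, fun _ => ⟨?_, ?_⟩, ?_⟩
    · intro h
      exfalso
      rw [gt_iff_lt, div_lt_iff₀ hl0] at h
      linarith
    -- lower bound
    · have hMsq : (N:ℝ) ≤ (((N/2:ℕ):ℝ)+1)^2 := by
        have h3 : N ≤ 2*(N/2)+1 := by omega
        have h4 : (N:ℝ) ≤ ((2*(N/2)+1 : ℕ):ℝ) := by exact_mod_cast h3
        push_cast at h4
        nlinarith [sq_nonneg (((N/2:ℕ):ℝ))]
      have hlogM : Real.log N ≤ 2 * Real.log (((N/2:ℕ):ℝ)+1) := by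
        have h := Real.log_le_log hNR hMsq
        rwa [Real.log_pow] at h
        -- log ((x)^2) = 2 * log x ; Real.log_pow : log (x ^ n) = n * log x
      have hsum : (1/2) * Real.log N ≤ ∑ k ∈ range (N/2), ((k:ℝ)+1)^(-(1:ℝ)) := by
        have := harm_ge (N/2)
        linarith
      calc (1/(2*v))^(l-1) * (1/2) * ((N:ℝ)^l * Real.log N)
          = ((N:ℝ)^v/(2*v))^(l-1) * ((1/2) * Real.log N) := by
            rw [hC0, hP, hNl]; ring
        _ ≤ ((N:ℝ)^v/(2*v))^(l-1) * ∑ k ∈ range (N/2), ((k:ℝ)+1)^(-(1:ℝ)) :=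
            mul_le_mul_of_nonneg_left hsum (hQnn N)
        _ ≤ gradedCellCount l v N := hlb
    -- upper bound
    · have hharm : ∑ k ∈ range N, ((k:ℝ)+1)^(-(1:ℝ)) ≤ 1 + Real.log N :=
        harm_le N (by omega)
      have hle : 1 + Real.log N ≤ (1 + 1/Real.log 2) * Real.log N := by
        have h1 : (1:ℝ) ≤ Real.log N / Real.log 2 := (one_le_div hlog2).mpr hlogN
        have h2 : Real.log N / Real.log 2 = (1/Real.log 2) * Real.log N := by ring
        nlinarith
      calc gradedCellCount l v N
          ≤ ((N:ℝ)^v)^(l-1) * ∑ k ∈ range N, ((k:ℝ)+1)^(-(1:ℝ)) := hub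
        _ ≤ ((N:ℝ)^v)^(l-1) * (1 + Real.log N) :=
            mul_le_mul_of_nonneg_left hharm (hPnn N)
        _ ≤ ((N:ℝ)^v)^(l-1) * ((1 + 1/Real.log 2) * Real.log N) :=
            mul_le_mul_of_nonneg_left hle (hPnn N)
        _ = (1 + 1/Real.log 2) * ((N:ℝ)^l * Real.log N) := by
            rw [hP, hNl]; ring
    · intro h
      exfalso
      rw [lt_div_iff₀ hl0] at h
      linarith
  -- ================= case 1 < α : v > l/(l-1) =================
  · refine ⟨(1/(2*v))^(l-1), 2^α/(α-1), ?_, ?_, ?_⟩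
    · positivity
    · have h1 := Real.rpow_pos_of_pos (show (0:ℝ) < 2 by norm_num) α
      have : (0:ℝ) < α - 1 := by linarith
      positivity
    intro N hN2
    obtain ⟨hNR, hub, hlb, hP, hC0⟩ := hNfacts N hN2
    have hM1 : 1 ≤ N/2 := by omega
    refine ⟨fun _ => ⟨?_, ?_⟩, ?_, ?_⟩
    -- lower bound
    · have hsum : (1:ℝ) ≤ ∑ k ∈ range (N/2), ((k:ℝ)+1)^(-α) := one_le_sum_rpow (N/2) hM1
      calc (1/(2*v))^(l-1) * (N:ℝ)^(v*((l:ℝ)-1))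
          = ((N:ℝ)^v/(2*v))^(l-1) * 1 := by rw [hC0, hP]; ring
        _ ≤ ((N:ℝ)^v/(2*v))^(l-1) * ∑ k ∈ range (N/2), ((k:ℝ)+1)^(-α) :=
            mul_le_mul_of_nonneg_left hsum (hQnn N)
        _ ≤ gradedCellCount l v N := hlb
    -- upper bound
    · calc gradedCellCount l v N
          ≤ ((N:ℝ)^v)^(l-1) * ∑ k ∈ range N, ((k:ℝ)+1)^(-α) := hub
        _ ≤ ((N:ℝ)^v)^(l-1) * (2^α/(α-1)) :=
            mul_le_mul_of_nonneg_left (sum_rpow_le_of_one_lt hc N) (hPnn N)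
        _ = 2^α/(α-1) * (N:ℝ)^(v*((l:ℝ)-1)) := by rw [hP]; ring
    · intro h
      exfalso
      rw [eq_div_iff hl0.ne'] at h
      linarith
    · intro h
      exfalso
      rw [lt_div_iff₀ hl0] at h
      linarith
end
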